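/- arXiv:1509.01528 — 7 statements merged into one kernel-verified Lean document; each statement's English description precedes it below -/
import Mathlib

section
/- Let n = 2m+1 be an odd positive integer. For any two real n×n matrices A₁, A₂ there exist real numbers (λ₁, λ₂) ≠ (0,0) such that the matrix λ₁A₁ + λ₂A₂ is singular (not invertible). -/
open Polynomial

/-- A monic real polynomial of odd degree has a real root. -/
lemma monic_odd_natDegree_exists_root {p : ℝ[X]} (hm : p.Monic)
    (hodd : Odd p.natDegree) : ∃ x : ℝ, p.eval x = 0 := by
  have hdeg0 : p.natDegree ≠ 0 := by
    intro h; rw [h] at hodd; simp [Nat.odd_iff] at hodd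
  have hdeg : 0 < p.degree := by
    rw [← Polynomial.natDegree_pos_iff_degree_pos]
    exact Nat.pos_of_ne_zero hdeg0
  -- p → +∞ at +∞
  have htop : Filter.Tendsto (fun x => p.eval x) Filter.atTop Filter.atTop :=
    p.tendsto_atTop_of_leadingCoeff_nonneg hdeg (by rw [hm.leadingCoeff]; norm_num)
  -- q x = p (-x) → -∞ at +∞
  set q : ℝ[X] := p.comp (-X) with hq
  have hqdeg : q.natDegree = p.natDegree := by
    rw [hq, Polynomial.natDegree_comp]; simp
  have hqlead : q.leadingCoeff = -1 := by
    rw [hq, Polynomial.leadingCoeff_comp (by simp)]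
    rw [hm.leadingCoeff]
    simp [Odd.neg_one_pow hodd]
  have hqdeg' : 0 < q.degree := by
    rw [← Polynomial.natDegree_pos_iff_degree_pos, hqdeg]
    exact Nat.pos_of_ne_zero hdeg0
  have hbot : Filter.Tendsto (fun x => q.eval x) Filter.atTop Filter.atBot :=
    q.tendsto_atBot_of_leadingCoeff_nonpos hqdeg' (by rw [hqlead]; norm_num)
  obtain ⟨b, hb⟩ := (htop.eventually (Filter.eventually_ge_atTop (1:ℝ))).exists
  obtain ⟨a, ha⟩ := (hbot.eventually (Filter.eventually_le_atBot (-1:ℝ))).exists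
  have ha' : p.eval (-a) ≤ -1 := by
    have : q.eval a = p.eval (-a) := by simp [hq]
    linarith [this ▸ ha]
  have hcont : ContinuousOn (fun x => p.eval x) (Set.uIcc (-a) b) :=
    (Polynomial.continuous p).continuousOn
  have h0 : (0:ℝ) ∈ Set.uIcc (p.eval (-a)) (p.eval b) := by
    rw [Set.mem_uIcc]; left; constructor <;> linarith
  obtain ⟨x, _, hx⟩ := intermediate_value_uIcc hcont h0
  exact ⟨x, hx⟩

/-- For n an odd positive integer, any two real n×n matrices admit a non-trivial
real linear combination that is singular. -/
theorem two_matrices_singular_combination (m : ℕ)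
    (A₁ A₂ : Matrix (Fin (2 * m + 1)) (Fin (2 * m + 1)) ℝ) :
    ∃ lam₁ lam₂ : ℝ, (lam₁, lam₂) ≠ (0, 0) ∧
      ¬ IsUnit (lam₁ • A₁ + lam₂ • A₂) := by
  by_cases h2 : IsUnit A₂.det
  · set B := A₂⁻¹ * A₁ with hB
    have hmono : B.charpoly.Monic := B.charpoly_monic
    have hdeg : B.charpoly.natDegree = 2 * m + 1 := by
      simp [Matrix.charpoly_natDegree_eq_dim]
    obtain ⟨μ, hμ⟩ := monic_odd_natDegree_exists_root hmono
      (by rw [hdeg]; exact ⟨m, by ring⟩)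
    refine ⟨1, -μ, by simp, ?_⟩
    rw [Matrix.isUnit_iff_isUnit_det]
    have key : (1:ℝ) • A₁ + (-μ) • A₂ = -(A₂ * (Matrix.scalar _ μ - B)) := by
      rw [Matrix.mul_sub, hB, ← Matrix.mul_assoc, Matrix.mul_nonsing_inv _ h2]
      have hd : Matrix.scalar (Fin (2*m+1)) μ = μ • (1 : Matrix (Fin (2*m+1)) (Fin (2*m+1)) ℝ) := by
        simp [Matrix.scalar_apply, Matrix.smul_one_eq_diagonal]
      rw [hd, Matrix.mul_smul, Matrix.mul_one, one_smul]
      simp only [neg_smul, one_smul, smul_smul, one_mul]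
      abel
    have hev : (Matrix.scalar (Fin (2*m+1)) μ - B).det = B.charpoly.eval μ := by
      rw [Matrix.charpoly, _root_.eval_det, Matrix.matPolyEquiv_charmatrix]
      simp
    rw [key, Matrix.det_neg, Matrix.det_mul, hev, hμ]
    simp
  · refine ⟨0, 1, by simp, ?_⟩
    rw [Matrix.isUnit_iff_isUnit_det]
    simpa using h2
end

section
/- (Borsuk–Ulam for S²) For every continuous map f : S² → ℝ² there exists a point s ∈ S² with f(-s) = f(s). -/
open Real Set

section Helpers

/-- A continuous function with values in `2πℤ` on an interval has equal endpoints. -/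
lemma bu_int_valued (h : ℝ → ℝ) (a b : ℝ) (hab : a ≤ b) (hc : ContinuousOn h (Set.Icc a b))
    (hint : ∀ t ∈ Set.Icc a b, ∃ k : ℤ, h t = k * (2*π)) : h b = h a := by
  obtain ⟨ka, hka⟩ := hint a ⟨le_refl a, hab⟩
  obtain ⟨kb, hkb⟩ := hint b ⟨hab, le_refl b⟩
  by_contra hne
  have hkne : ka ≠ kb := by rintro rfl; exact hne (hkb.trans hka.symm)
  have hπ : (0:ℝ) < π := Real.pi_pos
  rcases lt_or_gt_of_ne hkne with hlt | hgt
  · have h1 : (ka : ℝ) + 1 ≤ kb := by exact_mod_cast hlt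
    have hmem : (ka:ℝ)*(2*π) + π ∈ Icc (h a) (h b) := by
      constructor
      · rw [hka]; linarith
      · rw [hkb]; nlinarith
    obtain ⟨s, hs, hcs⟩ := intermediate_value_Icc hab hc hmem
    obtain ⟨ks, hks⟩ := hint s hs
    have e1 : (2*(ks:ℝ)) * π = (2*(ka:ℝ)+1) * π := by rw [hks] at hcs; linarith
    have e2 : (2*(ks:ℝ)) = 2*(ka:ℝ)+1 := mul_right_cancel₀ (ne_of_gt hπ) e1
    have : 2*ks = 2*ka+1 := by exact_mod_cast e2
    omega
  · have h1 : (kb : ℝ) + 1 ≤ ka := by exact_mod_cast hgt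
    have hmem : (kb:ℝ)*(2*π) + π ∈ Icc (h b) (h a) := by
      constructor
      · rw [hkb]; linarith
      · rw [hka]; nlinarith
    obtain ⟨s, hs, hcs⟩ := intermediate_value_Icc' hab hc hmem
    obtain ⟨ks, hks⟩ := hint s hs
    have e1 : (2*(ks:ℝ)) * π = (2*(kb:ℝ)+1) * π := by rw [hks] at hcs; linarith
    have e2 : (2*(ks:ℝ)) = 2*(kb:ℝ)+1 := mul_right_cancel₀ (ne_of_gt hπ) e1
    have : 2*ks = 2*kb+1 := by exact_mod_cast e2
    omega

/-- `W0 γ` : the loop `γ` (on `[0,1]`) admits an argument lift returning to its start. -/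
def W0 (γ : ℝ → ℂ) : Prop :=
  ∃ θ : ℝ → ℝ, ContinuousOn θ (Set.Icc 0 1) ∧
    (∀ t ∈ Set.Icc (0:ℝ) 1, (‖γ t‖ : ℂ) * Complex.exp (θ t * Complex.I) = γ t) ∧
    θ 1 = θ 0

lemma W0_const (c : ℂ) : W0 (fun _ => c) :=
  ⟨fun _ => Complex.arg c, continuousOn_const, fun _ _ => Complex.norm_mul_exp_arg_mul_I c, rfl⟩

lemma W0_step (γ δ : ℝ → ℂ)
    (hγc : ContinuousOn γ (Set.Icc 0 1)) (hδc : ContinuousOn δ (Set.Icc 0 1))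
    (hclose : ∀ t ∈ Set.Icc (0:ℝ) 1, ‖δ t - γ t‖ < ‖γ t‖)
    (hγl : γ 1 = γ 0) (hδl : δ 1 = δ 0) : W0 γ → W0 δ := by
  rintro ⟨θ, hθc, hθ, hθl⟩
  have hγ0 : ∀ t ∈ Set.Icc (0:ℝ) 1, γ t ≠ 0 := by
    intro t ht h0
    have h := hclose t ht
    rw [h0] at h; simp at h
    exact (norm_nonneg _).not_gt h
  have hδ0 : ∀ t ∈ Set.Icc (0:ℝ) 1, δ t ≠ 0 := by
    intro t ht h0
    have h := hclose t ht
    rw [h0, zero_sub, norm_neg] at h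
    exact lt_irrefl _ h
  have hre : ∀ t ∈ Set.Icc (0:ℝ) 1, 0 < (δ t / γ t).re := by
    intro t ht
    have hg := hγ0 t ht
    have hgabs : 0 < ‖γ t‖ := norm_pos_iff.mpr hg
    have h1 : ‖δ t / γ t - 1‖ < 1 := by
      rw [show δ t / γ t - 1 = (δ t - γ t) / γ t by field_simp]
      rw [norm_div, div_lt_one hgabs]
      exact hclose t ht
    have h2 := Complex.abs_re_le_norm (δ t / γ t - 1)
    simp only [Complex.sub_re, Complex.one_re] at h2
    have h3 : 1 - (δ t / γ t).re ≤ |(δ t / γ t).re - 1| := by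
      rw [abs_sub_comm]; exact le_abs_self _
    linarith
  refine ⟨fun t => θ t + Complex.arg (δ t / γ t), ?_, ?_, ?_⟩
  · apply hθc.add
    intro t ht
    have harg : ContinuousAt Complex.arg (δ t / γ t) :=
      Complex.continuousAt_arg (Or.inl (hre t ht))
    have hq : ContinuousWithinAt (fun x => δ x / γ x) (Set.Icc 0 1) t :=
      (hδc t ht).div (hγc t ht) (hγ0 t ht)
    have h2 := ContinuousAt.comp_continuousWithinAt (f := fun x => δ x / γ x) harg hq
    exact h2
  · intro t ht
    have hg := hγ0 t ht
    have hd := hδ0 t ht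
    have key := Complex.norm_mul_exp_arg_mul_I (δ t / γ t)
    have hθt := hθ t ht
    have habs : (‖δ t‖ : ℂ) ≠ 0 := by
      exact_mod_cast norm_ne_zero_iff.mpr hd
    have habsg : (‖γ t‖ : ℂ) ≠ 0 := by
      exact_mod_cast norm_ne_zero_iff.mpr hg
    rw [Complex.ofReal_add, add_mul, Complex.exp_add]
    rw [norm_div, Complex.ofReal_div] at key
    field_simp at key
    calc (‖δ t‖ : ℂ) *
          (Complex.exp (θ t * Complex.I) * Complex.exp (Complex.arg (δ t / γ t) * Complex.I))
        = (‖δ t‖ : ℂ) * Complex.exp (Complex.arg (δ t / γ t) * Complex.I)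
            * Complex.exp (θ t * Complex.I) := by ring
      _ = δ t := by
          have h5 : (‖δ t‖ : ℂ) * Complex.exp (Complex.arg (δ t / γ t) * Complex.I)
              = δ t * (‖γ t‖ : ℂ) / γ t := by
            field_simp at key ⊢
            linear_combination key
          rw [h5]
          rw [div_mul_eq_mul_div, mul_assoc, hθt, mul_div_assoc, div_self hg, mul_one]
  · have h10 : δ 1 / γ 1 = δ 0 / γ 0 := by rw [hγl, hδl]
    simp only [h10, hθl]

noncomputable def Pv (x y : ℝ) : EuclideanSpace ℝ (Fin 3) :=
  (EuclideanSpace.equiv (Fin 3) ℝ).symm ![x, y, Real.sqrt (max 0 (1 - x^2 - y^2))]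

lemma Pv_apply (x y : ℝ) (i : Fin 3) :
    Pv x y i = ![x, y, Real.sqrt (max 0 (1 - x^2 - y^2))] i := rfl

lemma Pv_norm (x y : ℝ) : ‖Pv x y‖ = Real.sqrt (x^2 + y^2 + max 0 (1 - x^2 - y^2)) := by
  rw [EuclideanSpace.norm_eq]
  congr 1
  rw [Fin.sum_univ_three]
  simp only [Pv_apply]
  simp [Real.norm_eq_abs, sq_abs, Real.sq_sqrt (le_max_left 0 _)]

lemma Pv_norm_ge (x y : ℝ) : 1 ≤ ‖Pv x y‖ := by
  rw [Pv_norm]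
  rcases le_total (x^2 + y^2) 1 with h | h
  · have hm : max 0 (1 - x^2 - y^2) = 1 - x^2 - y^2 := max_eq_right (by linarith)
    rw [hm]
    simp [show x^2+y^2+(1-x^2-y^2) = 1 by ring]
  · have h2 : (1:ℝ) ≤ x^2+y^2+ max 0 (1-x^2-y^2) := le_add_of_le_of_nonneg h (le_max_left _ _)
    nlinarith [Real.sq_sqrt (by linarith : (0:ℝ) ≤ x^2+y^2+max 0 (1-x^2-y^2)),
      Real.sqrt_nonneg (x^2+y^2+max 0 (1-x^2-y^2))]

lemma Pv_norm_pos (x y : ℝ) : 0 < ‖Pv x y‖ := lt_of_lt_of_le one_pos (Pv_norm_ge x y)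

noncomputable def Qv (x y : ℝ) : Metric.sphere (0 : EuclideanSpace ℝ (Fin 3)) 1 :=
  ⟨‖Pv x y‖⁻¹ • Pv x y, by
    rw [mem_sphere_zero_iff_norm, norm_smul, norm_inv, norm_norm,
      inv_mul_cancel₀ (Pv_norm_pos x y).ne']⟩

lemma Qv_neg (x y : ℝ) (h : x^2 + y^2 = 1) : Qv (-x) (-y) = - Qv x y := by
  have h0 : max 0 (1 - x^2 - y^2) = 0 := by
    rw [show (1:ℝ) - x^2 - y^2 = 0 by linarith]; simp
  have hP : Pv (-x) (-y) = - Pv x y := by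
    ext i
    have h0' : max 0 (1 - (-x)^2 - (-y)^2) = 0 := by
      rw [show (-x)^2 = x^2 by ring, show (-y)^2 = y^2 by ring]; exact h0
    fin_cases i <;>
      simp [Pv_apply, h0, h0', Real.sqrt_zero]
  apply Subtype.ext
  rw [coe_neg_sphere]
  show ‖Pv (-x) (-y)‖⁻¹ • Pv (-x) (-y) = -(‖Pv x y‖⁻¹ • Pv x y)
  rw [hP, norm_neg, smul_neg]

lemma Qv_continuous : Continuous (fun p : ℝ × ℝ => Qv p.1 p.2) := by
  have hP : Continuous (fun p : ℝ × ℝ => Pv p.1 p.2) := by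
    apply Continuous.comp (EuclideanSpace.equiv (Fin 3) ℝ).symm.continuous
    apply continuous_pi
    intro i
    fin_cases i <;> simp <;> fun_prop
  apply Continuous.subtype_mk
  exact (hP.norm.inv₀ (fun p => (Pv_norm_pos p.1 p.2).ne')).smul hP

end Helpers

/-- Borsuk–Ulam theorem for S²: every continuous map S² → ℝ² identifies some
pair of antipodal points. -/
theorem borsuk_ulam_S2
    (f : Metric.sphere (0 : EuclideanSpace ℝ (Fin 3)) 1 → EuclideanSpace ℝ (Fin 2))
    (hf : Continuous f) :
    ∃ s : Metric.sphere (0 : EuclideanSpace ℝ (Fin 3)) 1, f (-s) = f s := by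
  by_contra hn
  push_neg at hn
  -- the odd nonvanishing map g : S → ℂ
  set g : Metric.sphere (0 : EuclideanSpace ℝ (Fin 3)) 1 → ℂ := fun s =>
    ((f s 0 - f (-s) 0 : ℝ) : ℂ) + ((f s 1 - f (-s) 1 : ℝ) : ℂ) * Complex.I with hg_def
  have hneg_cont : Continuous (fun s : Metric.sphere (0 : EuclideanSpace ℝ (Fin 3)) 1 => -s) :=
    continuous_neg
  have hcoord : ∀ i : Fin 2,
      Continuous (fun s : Metric.sphere (0 : EuclideanSpace ℝ (Fin 3)) 1 => f s i) := fun i =>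
    (EuclideanSpace.proj i).continuous.comp hf
  have hg_cont : Continuous g := by
    apply Continuous.add
    · apply Complex.continuous_ofReal.comp
      exact (hcoord 0).sub ((hcoord 0).comp hneg_cont)
    · apply Continuous.mul _ continuous_const
      apply Complex.continuous_ofReal.comp
      exact (hcoord 1).sub ((hcoord 1).comp hneg_cont)
  have hg_odd : ∀ s, g (-s) = - g s := by
    intro s
    simp only [hg_def, neg_neg]
    push_cast
    ring
  have hg_ne : ∀ s, g s ≠ 0 := by
    intro s h0
    apply hn s
    have h0' := h0
    rw [hg_def] at h0'
    rw [Complex.ext_iff] at h0'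
    simp [Complex.add_re, Complex.add_im] at h0'
    obtain ⟨h1, h2⟩ := h0'
    ext i
    fin_cases i
    · exact (sub_eq_zero.mp h1).symm
    · exact (sub_eq_zero.mp h2).symm
  -- the loop family
  set H : ℝ → ℝ → ℂ := fun r t =>
    g (Qv (r * Real.cos (2*π*t)) (r * Real.sin (2*π*t))) with hH_def
  have hH_cont : Continuous (fun p : ℝ × ℝ => H p.1 p.2) := by
    have hrw : (fun p : ℝ × ℝ => H p.1 p.2)
        = (g ∘ (fun q : ℝ × ℝ => Qv q.1 q.2)) ∘
          (fun p : ℝ × ℝ => (p.1 * Real.cos (2*π*p.2), p.1 * Real.sin (2*π*p.2))) := rfl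
    rw [hrw]
    exact (hg_cont.comp Qv_continuous).comp (by fun_prop)
  have hH_ne : ∀ r t, H r t ≠ 0 := fun r t => hg_ne _
  have hHr : ∀ r : ℝ, Continuous (fun t => H r t) := by
    intro r
    have h := hH_cont.comp
      (Continuous.prodMk (continuous_const : Continuous fun _ : ℝ => r) continuous_id)
    exact h
  have hH_loop : ∀ r, H r 1 = H r 0 := by
    intro r
    simp only [hH_def]
    norm_num [Real.cos_two_pi, Real.sin_two_pi]
  have hH_anti : ∀ t : ℝ, H 1 (t + 1/2) = - H 1 t := by
    intro t
    have hc : 2*π*(t + 1/2) = 2*π*t + π := by ring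
    simp only [hH_def, hc, Real.cos_add_pi, Real.sin_add_pi, one_mul]
    rw [Qv_neg _ _ (Real.cos_sq_add_sin_sq (2*π*t))]
    exact hg_odd _
  -- compactness: minimum modulus and uniform continuity on [0,1]×[0,1]
  set K : Set (ℝ × ℝ) := Set.Icc 0 1 ×ˢ Set.Icc 0 1 with hK_def
  have hK_cpt : IsCompact K := isCompact_Icc.prod isCompact_Icc
  have hK_ne : K.Nonempty := ⟨(0,0), ⟨⟨le_refl _, zero_le_one⟩, ⟨le_refl _, zero_le_one⟩⟩⟩
  obtain ⟨p₀, hp₀, hmin⟩ := hK_cpt.exists_isMinOn hK_ne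
    (Continuous.continuousOn (continuous_norm.comp hH_cont))
  rw [isMinOn_iff] at hmin
  set m : ℝ := ‖H p₀.1 p₀.2‖ with hm_def
  have hm_pos : 0 < m := norm_pos_iff.mpr (hH_ne _ _)
  have hUC := hK_cpt.uniformContinuousOn_of_continuous hH_cont.continuousOn
  rw [Metric.uniformContinuousOn_iff] at hUC
  obtain ⟨ε, hε, hUC⟩ := hUC m hm_pos
  obtain ⟨n, hn_lt⟩ := exists_nat_one_div_lt hε
  set N : ℕ := n + 1 with hN_def
  have hN_pos : 0 < (N:ℝ) := by positivity
  have h1N : 1/(N:ℝ) < ε := by rw [hN_def]; push_cast; exact hn_lt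
  -- the chain: W0 (H (k/N)) for all k ≤ N
  have hchain : ∀ k : ℕ, k ≤ N → W0 (fun t => H ((k:ℝ)/N) t) := by
    intro k
    induction k with
    | zero =>
      intro _
      have : (fun t : ℝ => H ((0:ℕ)/(N:ℝ)) t) = fun _ => g (Qv 0 0) := by
        funext t
        simp [hH_def]
      rw [this]
      exact W0_const _
    | succ k ih =>
      intro hk
      have hk' : k ≤ N := Nat.le_of_succ_le hk
      have hkN : (k:ℝ)/N ∈ Set.Icc (0:ℝ) 1 := by
        constructor
        · positivity
        · rw [div_le_one hN_pos]; exact_mod_cast hk'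
      have hkN' : ((k+1:ℕ):ℝ)/N ∈ Set.Icc (0:ℝ) 1 := by
        constructor
        · positivity
        · rw [div_le_one hN_pos]; exact_mod_cast hk
      apply W0_step (fun t => H ((k:ℝ)/N) t) (fun t => H (((k+1:ℕ):ℝ)/N) t)
      · exact (hHr _).continuousOn
      · exact (hHr _).continuousOn
      · intro t ht
        have hd : dist (((k+1:ℕ):ℝ)/N, t) ((k:ℝ)/N, t) < ε := by
          rw [Prod.dist_eq]
          simp only [dist_self]
          rw [max_eq_left dist_nonneg]
          rw [Real.dist_eq]
          have : ((k+1:ℕ):ℝ)/N - (k:ℝ)/N = 1/N := by push_cast; field_simp; ring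
          rw [this, abs_of_pos (by positivity)]
          exact h1N
        have := hUC (((k+1:ℕ):ℝ)/N, t) ⟨hkN', ht⟩ ((k:ℝ)/N, t) ⟨hkN, ht⟩ hd
        rw [Complex.dist_eq] at this
        calc ‖H (((k+1:ℕ):ℝ)/N) t - H ((k:ℝ)/N) t‖ < m := this
          _ ≤ ‖H ((k:ℝ)/N) t‖ := hmin ((k:ℝ)/N, t) ⟨hkN, ht⟩
      · exact hH_loop _
      · exact hH_loop _
      · exact ih hk'
  have hW1 : W0 (fun t => H 1 t) := by
    have := hchain N (le_refl N)
    rwa [div_self hN_pos.ne'] at this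
  -- endgame: oddness forces nonzero winding
  obtain ⟨θ, hθc, hθ, hθl⟩ := hW1
  set d : ℝ → ℝ := fun t => θ (t + 1/2) - θ t - π with hd_def
  have hd_cont : ContinuousOn d (Set.Icc 0 (1/2)) := by
    apply ContinuousOn.sub _ continuousOn_const
    apply ContinuousOn.sub _ (hθc.mono (by intro x hx; exact ⟨hx.1, le_trans hx.2 (by norm_num)⟩))
    apply hθc.comp (by fun_prop : Continuous (fun t : ℝ => t + 1/2)).continuousOn
    intro x hx
    constructor <;> [linarith [hx.1]; linarith [hx.2]]
  have hd_int : ∀ t ∈ Set.Icc (0:ℝ) (1/2), ∃ k : ℤ, d t = k * (2*π) := by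
    intro t ht
    have ht1 : t ∈ Set.Icc (0:ℝ) 1 := ⟨ht.1, by linarith [ht.2]⟩
    have ht2 : t + 1/2 ∈ Set.Icc (0:ℝ) 1 := ⟨by linarith [ht.1], by linarith [ht.2]⟩
    have e1 : (‖H 1 t‖ : ℂ) * Complex.exp (θ t * Complex.I) = H 1 t := hθ t ht1
    have e2 : (‖H 1 (t + 1/2)‖ : ℂ) * Complex.exp (θ (t + 1/2) * Complex.I)
        = H 1 (t + 1/2) := hθ (t + 1/2) ht2
    rw [hH_anti t, norm_neg] at e2
    -- e2 : abs (H 1 t) * exp (θ(t+1/2) I) = - H 1 t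
    have habs : (‖H 1 t‖ : ℂ) ≠ 0 := by
      exact_mod_cast norm_ne_zero_iff.mpr (hH_ne 1 t)
    have e3 : Complex.exp (θ (t+1/2) * Complex.I) = - Complex.exp (θ t * Complex.I) := by
      have : (‖H 1 t‖ : ℂ) * Complex.exp (θ (t+1/2) * Complex.I)
          = (‖H 1 t‖ : ℂ) * (- Complex.exp (θ t * Complex.I)) := by
        rw [e2, mul_neg, e1]
      exact mul_left_cancel₀ habs this
    have e4 : Complex.exp ((d t : ℝ) * Complex.I) = 1 := by
      have hπI : Complex.exp ((π:ℝ) * Complex.I) = -1 := by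
        simp [Complex.exp_pi_mul_I]
      rw [hd_def]
      push_cast
      rw [show ((θ (t+1/2) : ℂ) - θ t - π) * Complex.I
          = θ (t+1/2) * Complex.I - θ t * Complex.I - π * Complex.I by ring]
      rw [Complex.exp_sub, Complex.exp_sub, e3, hπI]
      rw [neg_div, div_self (Complex.exp_ne_zero _)]
      norm_num
    rw [Complex.exp_eq_one_iff] at e4
    obtain ⟨k, hk⟩ := e4
    refine ⟨k, ?_⟩
    have : ((d t : ℝ) : ℂ) * Complex.I = ((k : ℝ) * (2*π) : ℝ) * Complex.I := by
      rw [hk]; push_cast; ring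
    have := mul_right_cancel₀ Complex.I_ne_zero this
    exact_mod_cast this
  have hd_eq := bu_int_valued d 0 (1/2) (by norm_num) hd_cont hd_int
  obtain ⟨k0, hk0⟩ := hd_int 0 ⟨le_refl _, by norm_num⟩
  -- θ 1 - θ 0 = d (1/2) + π + d 0 + π = 2 k0 (2π) + 2π ≠ 0, but θ 1 = θ 0
  have hsum : θ 1 - θ 0 = d (1/2) + d 0 + 2*π := by
    simp only [hd_def]
    norm_num
    ring
  rw [hθl, hd_eq, hk0] at hsum
  have hπ : (0:ℝ) < π := Real.pi_pos
  have : (2*(k0:ℝ) + 1) * (2*π) = 0 := by linarith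
  have h2 : (2*(k0:ℝ) + 1) = 0 := by
    rcases mul_eq_zero.mp this with h | h
    · exact h
    · linarith
  have : 2*k0 + 1 = 0 := by exact_mod_cast h2
  omega
end

section
/- There is no antipode-preserving continuous map from the 2-sphere to the circle: there is no continuous map ψ : S² → S¹ satisfying ψ(-s) = -ψ(s) for all s ∈ S². -/
open Complex Real Finset

noncomputable section BorsukAux

def eee : ℝ × ℝ → EuclideanSpace ℝ (Fin 3) := fun x =>
  (EuclideanSpace.equiv (Fin 3) ℝ).symm
    ![Real.sin x.1 * Real.cos x.2, Real.sin x.1 * Real.sin x.2, Real.cos x.1]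

lemma eee_cont : Continuous eee := by
  apply (EuclideanSpace.equiv (Fin 3) ℝ).symm.continuous.comp
  apply continuous_pi
  intro i
  fin_cases i <;> simp <;> fun_prop

lemma eee_mem (x : ℝ × ℝ) : eee x ∈ Metric.sphere (0 : EuclideanSpace ℝ (Fin 3)) 1 := by
  rw [mem_sphere_zero_iff_norm, EuclideanSpace.norm_eq, Fin.sum_univ_three]
  show Real.sqrt (‖Real.sin x.1 * Real.cos x.2‖^2 + ‖Real.sin x.1 * Real.sin x.2‖^2
      + ‖Real.cos x.1‖^2) = 1
  simp only [Real.norm_eq_abs]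
  rw [_root_.sq_abs, _root_.sq_abs, _root_.sq_abs]
  rw [show (Real.sin x.1 * Real.cos x.2) ^ 2 + (Real.sin x.1 * Real.sin x.2) ^ 2
      + Real.cos x.1 ^ 2
      = Real.sin x.1 ^ 2 * (Real.sin x.2 ^ 2 + Real.cos x.2 ^ 2) + Real.cos x.1 ^ 2 by ring]
  rw [Real.sin_sq_add_cos_sq, mul_one, Real.sin_sq_add_cos_sq, Real.sqrt_one]

lemma eee_per (s : ℝ) : eee (s, 2 * π) = eee (s, 0) := by
  unfold eee
  norm_num [Real.cos_two_pi, Real.sin_two_pi]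

lemma eee_pole (θ : ℝ) : eee (0, θ) = eee (0, 0) := by
  unfold eee
  norm_num

lemma eee_anti (θ : ℝ) : eee (π / 2, θ + π) = -eee (π / 2, θ) := by
  unfold eee
  rw [← map_neg]
  congr 1
  funext i
  fin_cases i <;>
    simp [Real.sin_pi_div_two, Real.cos_pi_div_two, Real.cos_add_pi, Real.sin_add_pi]

def ccc : EuclideanSpace ℝ (Fin 2) → ℂ := fun v => (v 0 : ℂ) + (v 1 : ℂ) * Complex.I

lemma ccc_cont : Continuous ccc := by
  have h0 : Continuous fun v : EuclideanSpace ℝ (Fin 2) => v 0 :=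
    (EuclideanSpace.proj (0 : Fin 2) : EuclideanSpace ℝ (Fin 2) →L[ℝ] ℝ).continuous
  have h1 : Continuous fun v : EuclideanSpace ℝ (Fin 2) => v 1 :=
    (EuclideanSpace.proj (1 : Fin 2) : EuclideanSpace ℝ (Fin 2) →L[ℝ] ℝ).continuous
  exact (Complex.continuous_ofReal.comp h0).add
    ((Complex.continuous_ofReal.comp h1).mul continuous_const)

lemma ccc_abs {v : EuclideanSpace ℝ (Fin 2)} (hv : ‖v‖ = 1) : ‖ccc v‖ = 1 := by
  have h : ‖ccc v‖ = Real.sqrt ((v 0) ^ 2 + (v 1) ^ 2) := by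
    rw [Complex.norm_def, ccc, Complex.normSq_add_mul_I]
  rw [h]
  rw [EuclideanSpace.norm_eq, Fin.sum_univ_two] at hv
  simpa [Real.norm_eq_abs, _root_.sq_abs] using hv

lemma ccc_neg (v : EuclideanSpace ℝ (Fin 2)) : ccc (-v) = -ccc v := by
  simp only [ccc]
  have h0 : (-v) 0 = -(v 0) := rfl
  have h1 : (-v) 1 = -(v 1) := rfl
  rw [h0, h1]
  push_cast
  ring

end BorsukAux


lemma aux_tele (G : ℕ → ℂ) (habs : ∀ k, ‖G k‖ = 1) (n : ℕ) :
    Complex.exp ((∑ k ∈ Finset.range n, Complex.arg (G (k + 1) / G k)) * Complex.I)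
      = G n / G 0 := by
  have hG : ∀ k, G k ≠ 0 := fun k => by
    intro h; have := habs k; rw [h] at this; simp at this
  induction n with
  | zero => simp [div_self (hG 0)]
  | succ n ih =>
    rw [Finset.sum_range_succ]
    push_cast [add_mul, Complex.exp_add]
    push_cast at ih
    rw [ih]
    have habsq : ‖G (n + 1) / G n‖ = 1 := by
      rw [norm_div, habs, habs, div_one]
    have := Complex.norm_mul_exp_arg_mul_I (G (n + 1) / G n)
    rw [habsq] at this
    push_cast at this
    rw [one_mul] at this
    rw [this]
    rw [div_mul_div_comm]
    rw [div_eq_div_iff (mul_ne_zero (hG 0) (hG n)) (hG 0)]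
    ring

lemma aux_slit {q : ℂ} (h1 : ‖q‖ = 1) (h2 : ‖q - 1‖ < 2) :
    q ∈ Complex.slitPlane := by
  rw [Complex.mem_slitPlane_iff]
  by_contra h
  push_neg at h
  obtain ⟨hre, him⟩ := h
  have hq : q = (q.re : ℂ) := by
    apply Complex.ext <;> simp [him]
  rw [hq, Complex.norm_real, Real.norm_eq_abs] at h1
  have : q.re = -1 := by
    rcases abs_eq (by norm_num : (0:ℝ) ≤ 1) |>.mp h1 with h | h
    · linarith
    · exact h
  rw [hq, this] at h2
  norm_num at h2


lemma aux_main (F : ℝ × ℝ → ℂ) (hFc : Continuous F)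
    (hFabs : ∀ x, ‖F x‖ = 1)
    (hper : ∀ s, F (s, 2 * π) = F (s, 0))
    (hpole : ∀ θ, F (0, θ) = F (0, 0))
    (hanti : ∀ θ, F (π / 2, θ + π) = -F (π / 2, θ)) : False := by
  have hπ : (0:ℝ) < π := Real.pi_pos
  have hF0 : ∀ x, F x ≠ 0 := fun x h => by simpa [h] using hFabs x
  have hqabs : ∀ s θ θ', ‖F (s, θ') / F (s, θ)‖ = 1 := fun s θ θ' => by
    rw [norm_div, hFabs, hFabs, div_one]
  -- uniform continuity on a compact rectangle
  have hK : IsCompact ((Set.Icc (0:ℝ) (π/2)) ×ˢ (Set.Icc (0:ℝ) (2*π))) :=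
    isCompact_Icc.prod isCompact_Icc
  have huc := hK.uniformContinuousOn_of_continuous hFc.continuousOn
  rw [Metric.uniformContinuousOn_iff] at huc
  obtain ⟨δ, hδ0, hδ⟩ := huc 2 (by norm_num)
  set m : ℕ := ⌊π/δ⌋₊ + 1 with hm
  have hm0 : (0:ℝ) < (m:ℝ) := by positivity
  have hmδ : π/(m:ℝ) < δ := by
    rw [div_lt_iff₀ hm0]
    have h1 : π/δ < (m:ℝ) := by
      rw [hm]; push_cast; exact Nat.lt_floor_add_one _
    calc π = (π/δ)*δ := by field_simp
    _ < (m:ℝ)*δ := mul_lt_mul_of_pos_right h1 hδ0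
    _ = δ*(m:ℝ) := mul_comm _ _
  set f : ℕ → ℝ := fun k => (k:ℝ) * π / (m:ℝ) with hf
  have hf0 : f 0 = 0 := by simp [hf]
  have hfm : f m = π := by
    simp only [hf]; field_simp
  have hf2m : f (2*m) = 2*π := by
    simp only [hf]; push_cast; field_simp
  have hfmem : ∀ k, k ≤ 2*m → f k ∈ Set.Icc (0:ℝ) (2*π) := by
    intro k hk
    constructor
    · simp only [hf]; positivity
    · simp only [hf]
      rw [div_le_iff₀ hm0]
      calc (k:ℝ)*π ≤ ((2*m : ℕ):ℝ)*π :=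
            mul_le_mul_of_nonneg_right (by exact_mod_cast hk) hπ.le
      _ = 2*π*(m:ℝ) := by push_cast; ring
  have hstep : ∀ k, f (k+1) - f k = π/(m:ℝ) := by
    intro k; simp only [hf]; push_cast; ring
  have hshift : ∀ k, f (m + k) = f k + π := by
    intro k; simp only [hf]; push_cast; field_simp; ring
  have hdist : ∀ s ∈ Set.Icc (0:ℝ) (π/2), ∀ k, k + 1 ≤ 2*m →
      dist (F (s, f (k+1))) (F (s, f k)) < 2 := by
    intro s hs k hk
    apply hδ (s, f (k+1)) ⟨hs, hfmem _ hk⟩ (s, f k)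
      ⟨hs, hfmem _ (le_trans (Nat.le_succ k) hk)⟩
    rw [Prod.dist_eq]
    simp only [dist_self]
    rw [max_eq_right dist_nonneg, Real.dist_eq, hstep k]
    rwa [abs_of_pos (by positivity)]
  have hslit : ∀ s ∈ Set.Icc (0:ℝ) (π/2), ∀ k, k + 1 ≤ 2*m →
      F (s, f (k+1)) / F (s, f k) ∈ Complex.slitPlane := by
    intro s hs k hk
    apply aux_slit (hqabs s _ _)
    rw [div_sub_one (hF0 _), norm_div, hFabs, div_one, ← Complex.dist_eq]
    exact hdist s hs k hk
  set W : ℝ → ℝ :=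
    fun s => ∑ k ∈ Finset.range (2*m), Complex.arg (F (s, f (k+1)) / F (s, f k)) with hW
  have hWc : ContinuousOn W (Set.Icc (0:ℝ) (π/2)) := by
    apply continuousOn_finset_sum
    intro k hk
    rw [Finset.mem_range] at hk
    apply continuousOn_of_forall_continuousAt
    intro s hs
    have h1 : ContinuousAt (fun s : ℝ => F (s, f (k+1)) / F (s, f k)) s := by
      apply ContinuousAt.div
      · exact (hFc.comp (continuous_id.prodMk continuous_const)).continuousAt
      · exact (hFc.comp (continuous_id.prodMk continuous_const)).continuousAt
      · exact hF0 _
    exact ContinuousAt.comp (g := Complex.arg) (Complex.continuousAt_arg (hslit s hs k hk)) h1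
  have hWint : ∀ s ∈ Set.Icc (0:ℝ) (π/2), ∃ j : ℤ, W s = j * (2*π) := by
    intro s _
    have htele := aux_tele (fun k => F (s, f k)) (fun k => hFabs _) (2*m)
    simp only [hf2m, hf0, hper s, div_self (hF0 (s, (0:ℝ)))] at htele
    rw [Complex.exp_eq_one_iff] at htele
    obtain ⟨j, hj⟩ := htele
    refine ⟨j, ?_⟩
    have hj2 : ((W s : ℝ) : ℂ) * Complex.I = (j:ℂ) * (2*(π:ℂ)*Complex.I) := by
      simp only [hW]
      exact_mod_cast hj
    have h3 : ((W s : ℝ) : ℂ) = ((j:ℂ) * (2*(π:ℂ))) := by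
      apply mul_right_cancel₀ Complex.I_ne_zero
      rw [hj2]; ring
    exact_mod_cast h3
  have hW0 : W 0 = 0 := by
    simp only [hW]
    apply Finset.sum_eq_zero
    intro k _
    rw [hpole (f (k+1)), hpole (f k), div_self (hF0 _), Complex.arg_one]
  -- the intermediate value argument: W (π/2) = 0
  have hWkey : W (π/2) = 0 := by
    by_contra hne
    obtain ⟨j, hj⟩ := hWint (π/2) (Set.right_mem_Icc.mpr (by positivity))
    have hj0 : j ≠ 0 := by
      intro h; rw [h] at hj; simp at hj; exact hne hj
    have hIcc : Set.uIcc (0:ℝ) (π/2) = Set.Icc (0:ℝ) (π/2) :=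
      Set.uIcc_of_le (by positivity)
    have hIVT := intermediate_value_uIcc (by rw [hIcc]; exact hWc)
    have hy : ∃ y : ℝ, (y = π ∨ y = -π) ∧ y ∈ Set.uIcc (W 0) (W (π/2)) := by
      rcases lt_or_gt_of_ne hj0 with hneg | hpos
      · refine ⟨-π, Or.inr rfl, ?_⟩
        rw [hW0, Set.uIcc_comm, Set.mem_uIcc]
        left
        constructor
        · rw [hj]
          have hj1 : j ≤ -1 := by omega
          have : (j:ℝ) ≤ -1 := by exact_mod_cast hj1
          nlinarith
        · linarith
      · refine ⟨π, Or.inl rfl, ?_⟩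
        rw [hW0, Set.mem_uIcc]
        left
        constructor
        · linarith
        · rw [hj]
          have hj1 : 1 ≤ j := by omega
          have : (1:ℝ) ≤ (j:ℝ) := by exact_mod_cast hj1
          nlinarith
    obtain ⟨y, hy1, hy2⟩ := hy
    obtain ⟨s, hs, hWs⟩ := hIVT hy2
    rw [hIcc] at hs
    obtain ⟨j', hj'⟩ := hWint s hs
    rw [hWs] at hj'
    rcases hy1 with rfl | rfl
    · have : (1:ℝ) * π = ((j' * 2 : ℤ):ℝ) * π := by push_cast; linarith
      have h2 : (1:ℝ) = ((j' * 2 : ℤ):ℝ) := mul_right_cancel₀ (ne_of_gt hπ) this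
      have : (1:ℤ) = j' * 2 := by exact_mod_cast h2
      omega
    · have : (-1:ℝ) * π = ((j' * 2 : ℤ):ℝ) * π := by push_cast; linarith
      have h2 : (-1:ℝ) = ((j' * 2 : ℤ):ℝ) := mul_right_cancel₀ (ne_of_gt hπ) this
      have : (-1:ℤ) = j' * 2 := by exact_mod_cast h2
      omega
  -- the oddness argument: W (π/2) = 2 * A with exp(A*I) = -1
  set A : ℝ := ∑ k ∈ Finset.range m, Complex.arg (F (π/2, f (k+1)) / F (π/2, f k)) with hA
  have hWA : W (π/2) = A + A := by
    simp only [hW, two_mul]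
    rw [Finset.sum_range_add]
    congr 1
    apply Finset.sum_congr rfl
    intro k _
    have e1 : f (m + k) = f k + π := hshift k
    have e2 : f (m + k + 1) = f (k+1) + π := by
      rw [show m + k + 1 = m + (k+1) by ring, hshift (k+1)]
    rw [e1, e2, hanti, hanti, neg_div_neg_eq]
  have hA0 : A = 0 := by linarith [hWkey, hWA]
  have htele := aux_tele (fun k => F (π/2, f k)) (fun k => hFabs _) m
  simp only [hfm, hf0] at htele
  rw [← hA, hA0] at htele
  have hFpi : F (π/2, π) = -F (π/2, 0) := by
    have := hanti 0
    rwa [zero_add] at this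
  rw [hFpi, neg_div, div_self (hF0 _)] at htele
  norm_num at htele


/-- There is no antipode-preserving continuous map from the 2-sphere to the circle. -/
theorem no_odd_map_S2_to_S1 :
    ¬ ∃ ψ : Metric.sphere (0 : EuclideanSpace ℝ (Fin 3)) 1 →
        Metric.sphere (0 : EuclideanSpace ℝ (Fin 2)) 1,
      Continuous ψ ∧ ∀ s, ψ (-s) = -ψ s := by
  rintro ⟨ψ, hψc, hψodd⟩
  set U : ℝ × ℝ → Metric.sphere (0 : EuclideanSpace ℝ (Fin 3)) 1 :=
    fun x => ⟨eee x, eee_mem x⟩ with hU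
  have hUc : Continuous U := eee_cont.subtype_mk _
  set F : ℝ × ℝ → ℂ := fun x => ccc (ψ (U x)) with hF
  apply aux_main F
  · exact ccc_cont.comp (continuous_subtype_val.comp (hψc.comp hUc))
  · intro x
    exact ccc_abs (mem_sphere_zero_iff_norm.mp (ψ (U x)).2)
  · intro s
    have h : U (s, 2 * π) = U (s, 0) := Subtype.ext (eee_per s)
    simp only [hF, h]
  · intro θ
    have h : U (0, θ) = U (0, 0) := Subtype.ext (eee_pole θ)
    simp only [hF, h]
  · intro θ
    have h : U (π / 2, θ + π) = -U (π / 2, θ) := by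
      apply Subtype.ext
      rw [coe_neg_sphere]
      exact eee_anti θ
    simp only [hF, h, hψodd, coe_neg_sphere, ccc_neg]
end

section
/- An antipode-preserving continuous map of the circle is not null-homotopic: if φ : S¹ → S¹ is continuous and satisfies φ(-s) = -φ(s) for all s ∈ S¹, then φ is not homotopic to a constant map. -/
open Complex Set Finset

lemma unit_ne_neg_self {z : ℂ} (hz : ‖z‖ = 1) : z ≠ -z := by
  intro h
  have : z = 0 := by linear_combination (1/2 : ℂ) * h
  simp [this] at hz

lemma unit_div_mem_slitPlane {z w : ℂ} (hz : ‖z‖ = 1)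
    (hw : ‖w‖ = 1) (h : z ≠ -w) : z / w ∈ Complex.slitPlane := by
  have hw0 : w ≠ 0 := by intro h0; simp [h0] at hw
  by_contra hq
  rw [Complex.mem_slitPlane_iff] at hq
  push_neg at hq
  obtain ⟨h1, h2⟩ := hq
  have habs : ‖(z / w)‖ = 1 := by
    rw [norm_div, hz, hw]; norm_num
  have hre : z / w = ((z / w).re : ℂ) := by
    apply Complex.ext <;> simp [h2]
  have habs' : |(z / w).re| = 1 := by
    have := habs
    rw [hre] at this
    simpa using this
  have hre1 : (z / w).re = -1 := by
    rcases abs_cases ((z/w).re) with ⟨ha, _⟩ | ⟨ha, _⟩ <;> nlinarith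
  apply h
  have hq1 : z / w = -1 := by rw [hre, hre1]; norm_num
  field_simp at hq1
  exact hq1

lemma exp_real_mul_I_eq_one_iff {x : ℝ} :
    Complex.exp (x * Complex.I) = 1 ↔ ∃ m : ℤ, x = 2 * Real.pi * m := by
  rw [Complex.exp_eq_one_iff]
  constructor
  · rintro ⟨n, hn⟩
    refine ⟨n, ?_⟩
    have hI : (x : ℂ) = n * (2 * Real.pi) :=
      mul_right_cancel₀ Complex.I_ne_zero (by rw [hn]; ring)
    have : (x : ℂ) = ((2 * Real.pi * n : ℝ) : ℂ) := by rw [hI]; push_cast; ring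
    exact_mod_cast this
  · rintro ⟨m, hm⟩
    exact ⟨m, by rw [hm]; push_cast; ring⟩

lemma tele_prod (f : ℕ → ℂ) (hf : ∀ k, f k ≠ 0) (N : ℕ) :
    ∏ k ∈ Finset.range N, f (k + 1) / f k = f N / f 0 := by
  induction N with
  | zero => simp [div_self (hf 0)]
  | succ n ih =>
    rw [Finset.prod_range_succ, ih, div_mul_div_comm, mul_comm (f 0) (f n),
      mul_div_mul_left _ _ (hf n)]

lemma endpoint_eq_of_int_valued {a b : ℝ} (hab : a ≤ b) {h : ℝ → ℝ}
    (hc : ContinuousOn h (Set.Icc a b))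
    (hi : ∀ t ∈ Set.Icc a b, ∃ m : ℤ, h t = 2 * Real.pi * m) : h b = h a := by
  by_contra hne
  obtain ⟨ma, hma⟩ := hi a ⟨le_refl a, hab⟩
  obtain ⟨mb, hmb⟩ := hi b ⟨hab, le_refl b⟩
  have hpi := Real.pi_pos
  have key : ∀ v, v ∈ Set.Icc (min (h a) (h b)) (max (h a) (h b)) →
      ∃ t ∈ Set.Icc a b, h t = v := by
    intro v hv
    have := intermediate_value_uIcc (a := a) (b := b) (f := h)
      (by rwa [Set.uIcc_of_le hab])
    rw [Set.uIcc_of_le hab] at this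
    have hv' : v ∈ Set.uIcc (h a) (h b) := by
      rw [Set.uIcc]; exact hv
    obtain ⟨t, ht, hht⟩ := this hv'
    exact ⟨t, ht, hht⟩
  rcases lt_or_gt_of_ne hne with hlt | hgt
  · -- h b < h a
    have hmlt : (mb : ℝ) < ma := by
      have h2 : 2 * Real.pi * mb < 2 * Real.pi * ma := by linarith
      exact lt_of_mul_lt_mul_left h2 (by positivity)
    have hmle : (mb : ℝ) ≤ ma - 1 := by
      have h3 : (mb : ℝ) + 1 ≤ ma := by
        exact_mod_cast Int.add_one_le_iff.mpr (show mb < ma by exact_mod_cast hmlt)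
      linarith
    obtain ⟨t, ht, hht⟩ := key (2 * Real.pi * ma - Real.pi) (by
      constructor
      · rw [min_eq_right hlt.le, hmb]; nlinarith
      · rw [max_eq_left hlt.le, hma]; nlinarith)
    obtain ⟨m, hm⟩ := hi t ht
    rw [hm] at hht
    have : 2 * (m : ℝ) = 2 * ma - 1 := by nlinarith
    have : 2 * m = 2 * ma - 1 := by exact_mod_cast this
    omega
  · have hmlt : (ma : ℝ) < mb := by nlinarith
    have hmle : (ma : ℝ) ≤ mb - 1 := by
      have h3 : (ma : ℝ) + 1 ≤ mb := by
        exact_mod_cast Int.add_one_le_iff.mpr (show ma < mb by exact_mod_cast hmlt)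
      linarith
    obtain ⟨t, ht, hht⟩ := key (2 * Real.pi * mb - Real.pi) (by
      constructor
      · rw [min_eq_left hgt.le, hma]; nlinarith
      · rw [max_eq_right hgt.le, hmb]; nlinarith)
    obtain ⟨m, hm⟩ := hi t ht
    rw [hm] at hht
    have : 2 * (m : ℝ) = 2 * mb - 1 := by nlinarith
    have : 2 * m = 2 * mb - 1 := by exact_mod_cast this
    omega

/-
We prove that an odd (antipode-preserving) continuous self-map of the circle
is not null-homotopic, by developing winding numbers of unit-circle-valued
paths from scratch.
-/
lemma unit_ne_zero {z : ℂ} (hz : ‖z‖ = 1) : z ≠ 0 := by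
  intro h; simp [h] at hz

lemma exp_arg_eq {z : ℂ} (hz : ‖z‖ = 1) :
    Complex.exp ((Complex.arg z : ℂ) * Complex.I) = z := by
  have := Complex.norm_mul_exp_arg_mul_I z
  rwa [hz, Complex.ofReal_one, one_mul] at this

noncomputable def gLift (γ : ℝ → ℂ) (N : ℕ) (t : ℝ) : ℝ :=
  Complex.arg (γ 0) + ∑ k ∈ Finset.range N,
    Complex.arg (γ (min t (((k : ℝ) + 1) / N)) / γ (min t ((k : ℝ) / N)))

lemma gLift_continuous {γ : ℝ → ℂ} {N : ℕ} (hN : 0 < N)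
    (hcont : Continuous γ) (hunit : ∀ t, ‖(γ t)‖ = 1)
    (hsep : ∀ u v, u ∈ Set.Icc (0:ℝ) 1 → v ∈ Set.Icc (0:ℝ) 1 → |u - v| ≤ 1 / N →
      γ u ≠ -γ v) :
    Continuous (gLift γ N) := by
  have hNR : (0:ℝ) < N := by exact_mod_cast hN
  apply continuous_const.add
  apply continuous_finset_sum
  intro k hk
  rw [Finset.mem_range] at hk
  set a : ℝ := ((k : ℝ) + 1) / N with ha
  set b : ℝ := (k : ℝ) / N with hb
  have hba : b ≤ a := by
    rw [ha, hb, div_le_div_iff₀ hNR hNR]; nlinarith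
  have ha1 : a ≤ 1 := by
    rw [ha, div_le_one hNR]
    exact_mod_cast Nat.succ_le_of_lt hk
  have hb0 : (0:ℝ) ≤ b := by positivity
  have hab : a - b = 1 / N := by rw [ha, hb]; ring
  have hq : Continuous fun t => γ (min t a) / γ (min t b) :=
    (hcont.comp (continuous_id.min continuous_const)).div
      (hcont.comp (continuous_id.min continuous_const))
      (fun t => unit_ne_zero (hunit _))
  rw [continuous_iff_continuousAt]
  intro t
  have hmem : γ (min t a) / γ (min t b) ∈ Complex.slitPlane := by
    rcases le_or_gt t b with htb | htb
    · have h1 : min t a = t := min_eq_left (htb.trans hba)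
      have h2 : min t b = t := min_eq_left htb
      rw [h1, h2, div_self (unit_ne_zero (hunit t))]
      exact Complex.one_mem_slitPlane
    · have h2 : min t b = b := min_eq_right htb.le
      rw [h2]
      have hu1 : min t a ∈ Set.Icc (0:ℝ) 1 :=
        ⟨le_min (hb0.trans htb.le) (hb0.trans hba), (min_le_right _ _).trans ha1⟩
      have hd : |min t a - b| ≤ 1 / N := by
        rw [abs_le]
        constructor
        · have : b ≤ min t a := le_min htb.le hba
          have : (0:ℝ) ≤ min t a - b := by linarith
          have h1N : (0:ℝ) ≤ 1 / N := by positivity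
          linarith
        · have : min t a ≤ a := min_le_right _ _
          linarith [hab]
      exact unit_div_mem_slitPlane (hunit _) (hunit _)
        (hsep _ _ hu1 ⟨hb0, hba.trans ha1⟩ hd)
  exact ContinuousAt.comp (f := fun t => γ (min t a) / γ (min t b))
    (Complex.continuousAt_arg hmem) hq.continuousAt

lemma gLift_lifts {γ : ℝ → ℂ} {N : ℕ} (hN : 0 < N)
    (hunit : ∀ t, ‖(γ t)‖ = 1) :
    ∀ t ∈ Set.Icc (0:ℝ) 1, Complex.exp ((gLift γ N t : ℂ) * Complex.I) = γ t := by
  intro t ht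
  rw [gLift, Complex.ofReal_add, Complex.ofReal_sum, add_mul, Finset.sum_mul,
    Complex.exp_add, Complex.exp_sum]
  have habs : ∀ u v : ℝ, ‖(γ u / γ v)‖ = 1 := by
    intro u v; rw [norm_div, hunit, hunit, div_one]
  have hprod : ∀ k ∈ Finset.range N,
      Complex.exp ((Complex.arg (γ (min t (((k : ℝ) + 1) / N)) / γ (min t ((k : ℝ) / N))) : ℂ)
        * Complex.I)
      = γ (min t (((k : ℝ) + 1) / N)) / γ (min t ((k : ℝ) / N)) :=
    fun k _ => exp_arg_eq (habs _ _)
  rw [Finset.prod_congr rfl hprod]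
  have htele := tele_prod (fun k => γ (min t ((k : ℝ) / N))) (fun k => unit_ne_zero (hunit _)) N
  push_cast at htele
  rw [htele]
  have hNN : ((N : ℝ) / N) = 1 := div_self (by exact_mod_cast hN.ne')
  rw [hNN, zero_div, min_eq_left ht.2, min_eq_right ht.1, exp_arg_eq (hunit 0),
    mul_comm, div_mul_cancel₀ _ (unit_ne_zero (hunit 0))]

lemma leash {γ δ : ℝ → ℂ}
    (hγc : ContinuousOn γ (Set.Icc 0 1)) (hδc : ContinuousOn δ (Set.Icc 0 1))
    (hγu : ∀ t ∈ Set.Icc (0:ℝ) 1, ‖(γ t)‖ = 1)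
    (hδu : ∀ t ∈ Set.Icc (0:ℝ) 1, ‖(δ t)‖ = 1)
    (hγl : γ 1 = γ 0) (hδl : δ 1 = δ 0)
    (hne : ∀ t ∈ Set.Icc (0:ℝ) 1, γ t ≠ -δ t)
    {g₁ g₂ : ℝ → ℝ}
    (hg₁c : ContinuousOn g₁ (Set.Icc 0 1)) (hg₂c : ContinuousOn g₂ (Set.Icc 0 1))
    (h₁ : ∀ t ∈ Set.Icc (0:ℝ) 1, Complex.exp ((g₁ t : ℂ) * Complex.I) = γ t)
    (h₂ : ∀ t ∈ Set.Icc (0:ℝ) 1, Complex.exp ((g₂ t : ℂ) * Complex.I) = δ t) :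
    g₁ 1 - g₁ 0 = g₂ 1 - g₂ 0 := by
  set k : ℝ → ℝ := fun t => g₁ t - g₂ t - Complex.arg (γ t / δ t) with hk
  have hone : (0:ℝ) ∈ Set.Icc (0:ℝ) 1 := ⟨le_refl 0, zero_le_one⟩
  have hone' : (1:ℝ) ∈ Set.Icc (0:ℝ) 1 := ⟨zero_le_one, le_refl 1⟩
  have hqc : ContinuousOn (fun t => γ t / δ t) (Set.Icc 0 1) :=
    hγc.div hδc (fun t ht => unit_ne_zero (hδu t ht))
  have hkc : ContinuousOn k (Set.Icc 0 1) := by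
    apply ((hg₁c.sub hg₂c).sub _)
    intro t ht
    exact ContinuousAt.comp_continuousWithinAt (f := fun t => γ t / δ t)
      (Complex.continuousAt_arg
        (unit_div_mem_slitPlane (hγu t ht) (hδu t ht) (hne t ht)))
      (hqc t ht)
  have hki : ∀ t ∈ Set.Icc (0:ℝ) 1, ∃ m : ℤ, k t = 2 * Real.pi * m := by
    intro t ht
    rw [← exp_real_mul_I_eq_one_iff]
    have habsq : ‖(γ t / δ t)‖ = 1 := by
      rw [norm_div, hγu t ht, hδu t ht, div_one]
    have : ((k t : ℝ) : ℂ) * Complex.I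
        = (g₁ t : ℂ) * Complex.I - (g₂ t : ℂ) * Complex.I
          - (Complex.arg (γ t / δ t) : ℂ) * Complex.I := by
      rw [hk]; push_cast; ring
    rw [this, Complex.exp_sub, Complex.exp_sub, h₁ t ht, h₂ t ht, exp_arg_eq habsq]
    exact div_self (unit_ne_zero habsq)
  have hend := endpoint_eq_of_int_valued zero_le_one hkc hki
  have harg : Complex.arg (γ 1 / δ 1) = Complex.arg (γ 0 / δ 0) := by rw [hγl, hδl]
  simp only [hk] at hend
  rw [harg] at hend
  linarith

open scoped Classical in
noncomputable def wind (γ : ℝ → ℂ) : ℝ :=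
  if h : ∃ g : ℝ → ℝ, ContinuousOn g (Set.Icc 0 1) ∧
      ∀ t ∈ Set.Icc (0:ℝ) 1, Complex.exp ((g t : ℂ) * Complex.I) = γ t
  then h.choose 1 - h.choose 0 else 0

lemma wind_spec {γ : ℝ → ℂ} (hc : ContinuousOn γ (Set.Icc 0 1))
    (hu : ∀ t ∈ Set.Icc (0:ℝ) 1, ‖(γ t)‖ = 1) (hl : γ 1 = γ 0)
    {g : ℝ → ℝ} (hg : ContinuousOn g (Set.Icc 0 1))
    (hlift : ∀ t ∈ Set.Icc (0:ℝ) 1, Complex.exp ((g t : ℂ) * Complex.I) = γ t) :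
    wind γ = g 1 - g 0 := by
  have hex : ∃ g : ℝ → ℝ, ContinuousOn g (Set.Icc 0 1) ∧
      ∀ t ∈ Set.Icc (0:ℝ) 1, Complex.exp ((g t : ℂ) * Complex.I) = γ t := ⟨g, hg, hlift⟩
  unfold wind
  rw [dif_pos hex]
  exact leash hc hc hu hu hl hl (fun t ht => unit_ne_neg_self (hu t ht))
    hex.choose_spec.1 hg hex.choose_spec.2 hlift

set_option maxHeartbeats 2000000 in
/-- An antipode-preserving continuous self-map of the circle is not
null-homotopic. -/
theorem odd_circle_map_not_nullhomotopic
    (φ : C(Metric.sphere (0 : EuclideanSpace ℝ (Fin 2)) 1,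
          Metric.sphere (0 : EuclideanSpace ℝ (Fin 2)) 1))
    (hφ : ∀ s, φ (-s) = -φ s) :
    ¬ ∃ y, φ.Homotopic (ContinuousMap.const _ y) := by
  rintro ⟨y, ⟨H⟩⟩
  set L := Complex.orthonormalBasisOneI.repr with hL
  -- the exponential parametrization of the sphere
  have hmem : ∀ t : ℝ, L (Complex.exp (((2 * Real.pi * t : ℝ) : ℂ) * Complex.I))
      ∈ Metric.sphere (0 : EuclideanSpace ℝ (Fin 2)) 1 := by
    intro t
    rw [mem_sphere_zero_iff_norm, L.norm_map,
      Complex.norm_exp_ofReal_mul_I]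
  set e : ℝ → Metric.sphere (0 : EuclideanSpace ℝ (Fin 2)) 1 :=
    fun t => ⟨L (Complex.exp (((2 * Real.pi * t : ℝ) : ℂ) * Complex.I)), hmem t⟩ with he
  have he_cont : Continuous e := by
    apply Continuous.subtype_mk
    exact L.continuous.comp (Complex.continuous_exp.comp
      ((Complex.continuous_ofReal.comp (continuous_const.mul continuous_id)).mul
        continuous_const))
  have he_antipode : ∀ t : ℝ, e (t + 1/2) = -e t := by
    intro t
    apply Subtype.ext
    rw [coe_neg_sphere]
    show L _ = -(L _)
    rw [← map_neg]
    congr 1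
    have hcast : (((2 * Real.pi * (t + 1/2) : ℝ)) : ℂ) * Complex.I
        = ((2 * Real.pi * t : ℝ) : ℂ) * Complex.I + (Real.pi : ℂ) * Complex.I := by
      push_cast; ring
    rw [hcast, Complex.exp_add, Complex.exp_pi_mul_I]
    ring
  have he_loop : e 1 = e 0 := by
    apply Subtype.ext
    show L _ = L _
    congr 1
    rw [show ((2*Real.pi*1 : ℝ) : ℂ) * Complex.I = 2*Real.pi*Complex.I by push_cast; ring,
      Complex.exp_two_pi_mul_I,
      show ((2*Real.pi*0 : ℝ) : ℂ) * Complex.I = 0 by push_cast; ring, Complex.exp_zero]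
  -- the homotopy as a two-parameter family of unit complex numbers
  set pr : ℝ → unitInterval := fun s => Set.projIcc 0 1 zero_le_one s with hpr
  set F : ℝ → ℝ → ℂ :=
    fun s t => L.symm ((H (pr s, e t) : EuclideanSpace ℝ (Fin 2))) with hF
  have hFunit : ∀ s t, ‖(F s t)‖ = 1 := by
    intro s t
    rw [hF, L.symm.norm_map]
    exact mem_sphere_zero_iff_norm.mp (H (pr s, e t)).2
  have hFcont : Continuous (fun p : ℝ × ℝ => F p.1 p.2) := by
    apply L.symm.continuous.comp
    apply continuous_subtype_val.comp
    apply H.continuous.comp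
    exact ((continuous_projIcc.comp continuous_fst).prodMk (he_cont.comp continuous_snd))
  have hFscont : ∀ s, Continuous (F s) := by
    intro s
    apply L.symm.continuous.comp
    apply continuous_subtype_val.comp
    apply H.continuous.comp
    exact continuous_const.prodMk he_cont
  have hFloop : ∀ s, F s 1 = F s 0 := by
    intro s; rw [hF]; simp only [he_loop]
  have hF0 : ∀ t, F 0 t = L.symm (φ (e t)) := by
    intro t
    simp only [hF]
    have : pr 0 = 0 := Set.projIcc_left _
    rw [this]
    congr 1
    exact congrArg _ (H.apply_zero (e t))
  have hF1 : ∀ t, F 1 t = L.symm (y : EuclideanSpace ℝ (Fin 2)) := by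
    intro t
    simp only [hF]
    have : pr 1 = 1 := Set.projIcc_right _
    rw [this]
    congr 1
    exact congrArg _ (H.apply_one (e t))
  have hF0odd : ∀ t, F 0 (t + 1/2) = -F 0 t := by
    intro t
    rw [hF0, hF0, he_antipode, hφ, coe_neg_sphere, map_neg]
  -- uniform continuity
  have hK : IsCompact (Set.Icc (0:ℝ) 1 ×ˢ Set.Icc (0:ℝ) 1) :=
    isCompact_Icc.prod isCompact_Icc
  have hGuc := hK.uniformContinuousOn_of_continuous hFcont.continuousOn
  rw [Metric.uniformContinuousOn_iff] at hGuc
  obtain ⟨δ, hδpos, hδ⟩ := hGuc 2 (by norm_num)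
  obtain ⟨n, hn⟩ := exists_nat_one_div_lt hδpos
  set N : ℕ := n + 1 with hNdef
  have hNpos : 0 < N := Nat.succ_pos n
  have hNR : (0:ℝ) < N := by exact_mod_cast hNpos
  have h1N : (1:ℝ)/N < δ := by
    rw [hNdef]; push_cast; exact hn
  have hclose : ∀ p q : ℝ × ℝ, p ∈ Set.Icc (0:ℝ) 1 ×ˢ Set.Icc (0:ℝ) 1 →
      q ∈ Set.Icc (0:ℝ) 1 ×ˢ Set.Icc (0:ℝ) 1 → dist p q ≤ 1/N →
      F p.1 p.2 ≠ -F q.1 q.2 := by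
    intro p q hp hq hd heq
    have h2 := hδ p hp q hq (lt_of_le_of_lt hd h1N)
    have h3 : ‖(-F q.1 q.2 - F q.1 q.2)‖ = 2 := by
      have he2 : -F q.1 q.2 - F q.1 q.2 = (-2) * F q.1 q.2 := by ring
      rw [he2, norm_mul, hFunit q.1 q.2, mul_one,
        show ((-2 : ℂ)) = ((-2 : ℝ) : ℂ) by norm_num, Complex.norm_real]
      norm_num
    rw [heq, Complex.dist_eq, h3] at h2
    exact lt_irrefl 2 h2
  have hsepIn : ∀ s ∈ Set.Icc (0:ℝ) 1, ∀ u v, u ∈ Set.Icc (0:ℝ) 1 →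
      v ∈ Set.Icc (0:ℝ) 1 → |u - v| ≤ 1/N → F s u ≠ -F s v := by
    intro s hs u v hu hv hd
    exact hclose (s, u) (s, v) ⟨hs, hu⟩ ⟨hs, hv⟩ (by
      rw [Prod.dist_eq]
      apply max_le
      · simp only [dist_self]; positivity
      · rw [Real.dist_eq]; exact hd)
  have hsepBt : ∀ s s', s ∈ Set.Icc (0:ℝ) 1 → s' ∈ Set.Icc (0:ℝ) 1 →
      |s - s'| ≤ 1/N → ∀ t ∈ Set.Icc (0:ℝ) 1, F s t ≠ -F s' t := by
    intro s s' hs hs' hd t ht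
    exact hclose (s, t) (s', t) ⟨hs, ht⟩ ⟨hs', ht⟩ (by
      rw [Prod.dist_eq]
      apply max_le
      · rw [Real.dist_eq]; exact hd
      · simp only [dist_self]; positivity)
  -- each curve has a winding number given by gLift
  have hwind : ∀ s ∈ Set.Icc (0:ℝ) 1,
      wind (F s) = gLift (F s) N 1 - gLift (F s) N 0 := by
    intro s hs
    exact wind_spec (hFscont s).continuousOn (fun t _ => hFunit s t) (hFloop s)
      (gLift_continuous hNpos (hFscont s) (hFunit s) (hsepIn s hs)).continuousOn
      (gLift_lifts hNpos (hFunit s))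
  -- step invariance
  have hstep : ∀ s s', s ∈ Set.Icc (0:ℝ) 1 → s' ∈ Set.Icc (0:ℝ) 1 →
      |s - s'| ≤ 1/N → wind (F s) = wind (F s') := by
    intro s s' hs hs' hd
    rw [hwind s hs, hwind s' hs']
    exact leash (hFscont s).continuousOn (hFscont s').continuousOn
      (fun t _ => hFunit s t) (fun t _ => hFunit s' t) (hFloop s) (hFloop s')
      (hsepBt s s' hs hs' hd)
      (gLift_continuous hNpos (hFscont s) (hFunit s) (hsepIn s hs)).continuousOn
      (gLift_continuous hNpos (hFscont s') (hFunit s') (hsepIn s' hs')).continuousOn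
      (gLift_lifts hNpos (hFunit s)) (gLift_lifts hNpos (hFunit s'))
  -- chain along the homotopy
  have hchain : ∀ k : ℕ, k ≤ N → wind (F ((k : ℝ)/N)) = wind (F 0) := by
    intro k hk
    induction k with
    | zero => norm_num
    | succ j ih =>
      have hj : j ≤ N := Nat.le_of_succ_le hk
      have hmem1 : ((j : ℝ) + 1)/N ∈ Set.Icc (0:ℝ) 1 := by
        constructor
        · positivity
        · rw [div_le_one hNR]; exact_mod_cast hk
      have hmem0 : (j : ℝ)/N ∈ Set.Icc (0:ℝ) 1 := by
        constructor
        · positivity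
        · rw [div_le_one hNR]; exact_mod_cast hj.trans (le_refl N) |>.trans (le_refl N)
      have hdist : |((j : ℝ) + 1)/N - (j : ℝ)/N| ≤ 1/N := by
        have hde : ((j : ℝ) + 1)/N - (j : ℝ)/N = 1/N := by ring
        have hge : (0:ℝ) ≤ 1/(N:ℝ) := by positivity
        rw [hde, _root_.abs_of_nonneg hge]
      have hst := hstep _ _ hmem1 hmem0 hdist
      have hcast : ((j + 1 : ℕ) : ℝ) = (j : ℝ) + 1 := by push_cast; ring
      rw [hcast, hst]
      exact ih hj
  have hNend : wind (F 1) = wind (F 0) := by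
    have := hchain N (le_refl N)
    rwa [div_self hNR.ne'] at this
  -- wind (F 1) = 0 (constant curve)
  have hwind1 : wind (F 1) = 0 := by
    have habs : ‖(L.symm (y : EuclideanSpace ℝ (Fin 2)))‖ = 1 := by
      rw [← hF1 0]; exact hFunit 1 0
    have := wind_spec (γ := F 1) (hFscont 1).continuousOn (fun t _ => hFunit 1 t)
      (hFloop 1) (g := fun _ => Complex.arg (L.symm (y : EuclideanSpace ℝ (Fin 2))))
      continuousOn_const
      (fun t _ => by rw [hF1 t]; exact exp_arg_eq habs)
    rw [this]; ring
  -- odd winding for F 0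
  set g0 : ℝ → ℝ := gLift (F 0) N with hg0
  have hg0cont : Continuous g0 :=
    gLift_continuous hNpos (hFscont 0) (hFunit 0)
      (hsepIn 0 ⟨le_refl 0, zero_le_one⟩)
  have hg0lift := gLift_lifts (γ := F 0) (N := N) hNpos (hFunit 0)
  have hwind0 : wind (F 0) = g0 1 - g0 0 := hwind 0 ⟨le_refl 0, zero_le_one⟩
  set h : ℝ → ℝ := fun t => g0 (t + 1/2) - g0 t - Real.pi with hh
  have hhc : ContinuousOn h (Set.Icc 0 (1/2)) :=
    (((hg0cont.comp (continuous_id.add continuous_const)).sub hg0cont).sub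
      continuous_const).continuousOn
  have hhi : ∀ t ∈ Set.Icc (0:ℝ) (1/2), ∃ m : ℤ, h t = 2 * Real.pi * m := by
    intro t ht
    rw [← exp_real_mul_I_eq_one_iff]
    have ht1 : t ∈ Set.Icc (0:ℝ) 1 := ⟨ht.1, ht.2.trans (by norm_num)⟩
    have ht2 : t + 1/2 ∈ Set.Icc (0:ℝ) 1 := ⟨by linarith [ht.1], by linarith [ht.2]⟩
    have hz := unit_ne_zero (hFunit 0 t)
    have hcast : ((h t : ℝ) : ℂ) * Complex.I
        = (g0 (t + 1/2) : ℂ) * Complex.I - (g0 t : ℂ) * Complex.I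
          - (Real.pi : ℂ) * Complex.I := by
      rw [hh]; push_cast; ring
    rw [hcast, Complex.exp_sub, Complex.exp_sub, hg0lift _ ht2, hg0lift _ ht1,
      Complex.exp_pi_mul_I, hF0odd, neg_div, div_self hz]
    norm_num
  have hhend : h (1/2) = h 0 := endpoint_eq_of_int_valued (by norm_num) hhc hhi
  obtain ⟨m, hm⟩ := hhi 0 ⟨le_refl 0, by norm_num⟩
  have h0eq : h 0 = g0 (1/2) - g0 0 - Real.pi := by rw [hh]; norm_num
  have h12eq : h (1/2) = g0 1 - g0 (1/2) - Real.pi := by rw [hh]; norm_num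
  -- contradiction
  have hpi := Real.pi_pos
  have : 2 * Real.pi * (2 * m + 1) = 0 := by
    have e1 : g0 (1/2) - g0 0 = Real.pi + 2 * Real.pi * m := by
      rw [h0eq] at hm; linarith
    have e2 : g0 1 - g0 (1/2) = Real.pi + 2 * Real.pi * m := by
      rw [h12eq, h0eq] at hhend; linarith
    have : wind (F 0) = 2 * Real.pi * (2 * m + 1) := by
      rw [hwind0]; push_cast; linarith
    rw [← this, ← hNend, hwind1]
  have hm0 : (2 * (m : ℝ) + 1) = 0 := by
    rcases mul_eq_zero.mp this with h' | h'
    · linarith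
    · exact h'
  have : (2 * m + 1 : ℤ) = 0 := by exact_mod_cast hm0
  omega
end

section
/- Every antipode-preserving continuous map of the 2-sphere is surjective: if g : S² → S² is continuous and satisfies g(-s) = -g(s) for all s ∈ S², then g is onto. -/
open Real Set

section BorsukUlamAux

lemma lipMin (t a b : ℝ) : |min t a - min t b| ≤ |a - b| := by
  rcases le_total t a with h | h <;> rcases le_total t b with h' | h' <;>
    simp [min_eq_left, min_eq_right, h, h', abs_le] <;>
    constructor <;>
    linarith [le_abs_self (a - b), neg_abs_le (a - b), abs_nonneg (a - b)]

lemma lipMax (t a b : ℝ) : |max t a - max t b| ≤ |a - b| := by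
  rcases le_total t a with h | h <;> rcases le_total t b with h' | h' <;>
    simp [max_eq_left, max_eq_right, h, h', abs_le] <;>
    constructor <;>
    linarith [le_abs_self (a - b), neg_abs_le (a - b), abs_nonneg (a - b)]

lemma half_not_int (k1 k : ℤ) : (k : ℝ) ≠ (k1 : ℝ) + 1/2 := by
  intro hcon
  have h1 : ((k - k1 : ℤ) : ℝ) = 1/2 := by push_cast; linarith
  rcases le_or_gt (k - k1) 0 with h2 | h2
  · have : ((k - k1 : ℤ) : ℝ) ≤ 0 := by exact_mod_cast h2
    linarith
  · have : (1 : ℝ) ≤ ((k - k1 : ℤ) : ℝ) := by exact_mod_cast h2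
    linarith

lemma intval_eq {a b : ℝ} (hab : a ≤ b) {f : ℝ → ℝ} (hf : ContinuousOn f (Set.Icc a b))
    (hint : ∀ x ∈ Set.Icc a b, ∃ k : ℤ, f x = k) : f a = f b := by
  have ha : a ∈ Set.Icc a b := ⟨le_refl a, hab⟩
  have hb : b ∈ Set.Icc a b := ⟨hab, le_refl b⟩
  obtain ⟨k1, hk1⟩ := hint a ha
  obtain ⟨k2, hk2⟩ := hint b hb
  by_contra hne
  rcases lt_or_gt_of_ne hne with h | h
  · have hk : (k1 : ℝ) < k2 := by rw [← hk1, ← hk2]; exact h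
    have hk' : k1 < k2 := by exact_mod_cast hk
    have hmem : (k1 : ℝ) + 1/2 ∈ Set.Ioo (f a) (f b) := by
      constructor
      · rw [hk1]; linarith
      · rw [hk2]
        have : (k1 : ℝ) + 1 ≤ k2 := by exact_mod_cast hk'
        linarith
    obtain ⟨x, hx, hfx⟩ := intermediate_value_Ioo hab hf hmem
    obtain ⟨k, hkk⟩ := hint x (Set.Ioo_subset_Icc_self hx)
    exact half_not_int k1 k (by rw [← hkk, hfx])
  · have hk : (k2 : ℝ) < k1 := by rw [← hk1, ← hk2]; exact h
    have hk' : k2 < k1 := by exact_mod_cast hk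
    have hmem : (k2 : ℝ) + 1/2 ∈ Set.Ioo (f b) (f a) := by
      constructor
      · rw [hk2]; linarith
      · rw [hk1]
        have : (k2 : ℝ) + 1 ≤ k1 := by exact_mod_cast hk'
        linarith
    obtain ⟨x, hx, hfx⟩ := intermediate_value_Ioo' hab hf hmem
    obtain ⟨k, hkk⟩ := hint x (Set.Ioo_subset_Icc_self hx)
    exact half_not_int k2 k (by rw [← hkk, hfx])

lemma prod_ratio (f : ℕ → ℂ) (hf : ∀ j, f j ≠ 0) :
    ∀ n, (∏ j ∈ Finset.range n, f (j+1) / f j) = f n / f 0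
  | 0 => by simp [div_self (hf 0)]
  | n+1 => by
      rw [Finset.prod_range_succ, prod_ratio f hf n]
      rw [div_mul_div_comm, mul_comm]
      rw [mul_div_mul_right _ _ (hf n)]

lemma ratio_slit {F : ℝ × ℝ → ℂ} {m δ : ℝ}
    (h0 : ∀ p, F p ≠ 0)
    (hlow : ∀ p, m ≤ ‖F p‖)
    (hmod : ∀ p q : ℝ × ℝ, dist p q ≤ δ → ‖F p - F q‖ < m)
    {p q : ℝ × ℝ} (h : dist p q ≤ δ) : F p / F q ∈ Complex.slitPlane := by
  have hq := h0 q
  have habs : ‖F p / F q - 1‖ < 1 := by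
    rw [div_sub_one hq, norm_div, div_lt_one (norm_pos_iff.mpr hq)]
    exact lt_of_lt_of_le (hmod p q h) (hlow q)
  rw [Complex.mem_slitPlane_iff]
  left
  have h2 : |(F p / F q - 1).re| ≤ ‖F p / F q - 1‖ := Complex.abs_re_le_norm _
  have h3 : (F p / F q - 1).re = (F p / F q).re - 1 := by simp
  have h4 := abs_lt.mp (lt_of_le_of_lt h2 habs)
  rw [h3] at h4
  linarith [h4.1]

lemma exists_log_lift (F : ℝ × ℝ → ℂ) (hF : Continuous F) (h0 : ∀ p, F p ≠ 0)
    {m δ : ℝ} (hm : 0 < m) (hδ : 0 < δ) (hlow : ∀ p, m ≤ ‖F p‖)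
    (hmod : ∀ p q : ℝ × ℝ, dist p q ≤ δ → ‖F p - F q‖ < m) :
    ∃ L : ℝ × ℝ → ℂ, Continuous L ∧
      ∀ s t : ℝ, s ∈ Set.Icc (0:ℝ) 1 → t ∈ Set.Icc (0:ℝ) 2 →
        Complex.exp (L (s, t)) = F (s, t) := by
  obtain ⟨n, hn⟩ := exists_nat_gt (2 / δ)
  set N : ℕ := n + 1 with hNdef
  have hNpos : (0:ℝ) < (N:ℝ) := by positivity
  have hNge : 2 / δ < (N:ℝ) := lt_of_lt_of_le hn (by exact_mod_cast Nat.le_succ n)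
  have h2N : 2 / (N:ℝ) < δ := by
    rw [div_lt_iff₀ hNpos]
    rw [div_lt_iff₀ hδ] at hNge
    linarith
  set r : ℕ → ℝ := fun j => (j:ℝ) / N with hr
  set τ : ℕ → ℝ := fun j => 2 * (j:ℝ) / N with hτ
  have hrstep : ∀ j, |r (j+1) - r j| ≤ δ := by
    intro j
    have h1 : r (j+1) - r j = 1 / N := by rw [hr]; push_cast; ring
    rw [h1, abs_of_pos (by positivity)]
    have : 1 / (N:ℝ) ≤ 2 / N := by apply div_le_div_of_nonneg_right <;> norm_num
    linarith
  have hτstep : ∀ j, |τ (j+1) - τ j| ≤ δ := by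
    intro j
    have h1 : τ (j+1) - τ j = 2 / N := by rw [hτ]; push_cast; ring
    rw [h1, abs_of_pos (by positivity)]
    linarith
  have dist_snd : ∀ (s a b : ℝ), dist ((s, a) : ℝ×ℝ) (s, b) = |a - b| := by
    intro s a b
    rw [Prod.dist_eq]
    simp [Real.dist_eq]
  have dist_fst : ∀ (a b t : ℝ), dist ((a, t) : ℝ×ℝ) (b, t) = |a - b| := by
    intro a b t
    rw [Prod.dist_eq]
    simp [Real.dist_eq]
  refine ⟨fun p =>
    Complex.log (F (0, 0))
    + ∑ j ∈ Finset.range N, Complex.log (F (min p.1 (r (j+1)), 0) / F (min p.1 (r j), 0))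
    + ∑ j ∈ Finset.range N, Complex.log (F (p.1, min p.2 (τ (j+1))) / F (p.1, min p.2 (τ j))),
    ?_, ?_⟩
  · apply Continuous.add
    · apply Continuous.add continuous_const
      apply continuous_finset_sum
      intro j _
      rw [continuous_iff_continuousAt]
      intro p
      have c1 : Continuous fun p : ℝ×ℝ => F (min p.1 (r (j+1)), 0) :=
        hF.comp ((continuous_fst.min continuous_const).prodMk continuous_const)
      have c2 : Continuous fun p : ℝ×ℝ => F (min p.1 (r j), 0) :=
        hF.comp ((continuous_fst.min continuous_const).prodMk continuous_const)
      refine ContinuousAt.clog ((c1.continuousAt).div (c2.continuousAt) (h0 _)) ?_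
      apply ratio_slit h0 hlow hmod
      rw [dist_fst]
      exact le_trans (lipMin _ _ _) (hrstep j)
    · apply continuous_finset_sum
      intro j _
      rw [continuous_iff_continuousAt]
      intro p
      have c1 : Continuous fun p : ℝ×ℝ => F (p.1, min p.2 (τ (j+1))) :=
        hF.comp (continuous_fst.prodMk (continuous_snd.min continuous_const))
      have c2 : Continuous fun p : ℝ×ℝ => F (p.1, min p.2 (τ j)) :=
        hF.comp (continuous_fst.prodMk (continuous_snd.min continuous_const))
      refine ContinuousAt.clog ((c1.continuousAt).div (c2.continuousAt) (h0 _)) ?_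
      apply ratio_slit h0 hlow hmod
      rw [dist_snd]
      exact le_trans (lipMin _ _ _) (hτstep j)
  · intro s t hs ht
    simp only
    rw [Complex.exp_add, Complex.exp_add, Complex.exp_sum, Complex.exp_sum]
    rw [Finset.prod_congr rfl
      (fun j _ => Complex.exp_log (div_ne_zero (h0 (s, min t (τ (j+1)))) (h0 (s, min t (τ j)))))]
    rw [Finset.prod_congr rfl
      (fun j _ => Complex.exp_log (div_ne_zero (h0 (min s (r (j+1)), 0)) (h0 (min s (r j), 0))))]
    rw [prod_ratio (fun j => F (min s (r j), 0)) (fun j => h0 _) N]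
    rw [prod_ratio (fun j => F (s, min t (τ j))) (fun j => h0 _) N]
    have hrN : r N = 1 := by rw [hr]; field_simp
    have hr0 : r 0 = 0 := by rw [hr]; simp
    have hτN : τ N = 2 := by rw [hτ]; field_simp
    have hτ0 : τ 0 = 0 := by rw [hτ]; simp
    rw [hrN, hr0, hτN, hτ0, min_eq_left hs.2, min_eq_right hs.1, min_eq_left ht.2,
      min_eq_right ht.1, Complex.exp_log (h0 (0,0))]
    field_simp
    exact mul_div_cancel_left₀ _ (mul_ne_zero (h0 0) (h0 (s,0)))

lemma no_odd_core (F₀ : ℝ × ℝ → ℂ) (hF₀ : Continuous F₀) (hF₀0 : ∀ p, F₀ p ≠ 0)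
    (hper : ∀ s t : ℝ, F₀ (s, t + 2) = F₀ (s, t))
    (hoddF : ∀ s t : ℝ, F₀ (1 - s, t + 1) = -F₀ (s, t))
    (hnorth : ∀ t : ℝ, F₀ (0, t) = F₀ (0, 0)) : False := by
  classical
  set Q : Set (ℝ × ℝ) := Set.Icc (0:ℝ) 1 ×ˢ Set.Icc (0:ℝ) 2 with hQdef
  set cl : ℝ × ℝ → ℝ × ℝ := fun p => (max 0 (min 1 p.1), max 0 (min 2 p.2)) with hcl
  have hclcont : Continuous cl := by
    apply Continuous.prodMk <;> exact continuous_const.max (continuous_const.min (by fun_prop))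
  have hclQ : ∀ p, cl p ∈ Q := by
    intro p
    refine ⟨⟨le_max_left _ _, max_le (by norm_num) (min_le_left _ _)⟩,
      ⟨le_max_left _ _, max_le (by norm_num) (min_le_left _ _)⟩⟩
  have hclid : ∀ p ∈ Q, cl p = p := by
    rintro ⟨a, b⟩ ⟨⟨ha0, ha1⟩, hb0, hb2⟩
    simp only [hcl]
    rw [min_eq_right ha1, max_eq_right ha0, min_eq_right hb2, max_eq_right hb0]
  have hcllip : ∀ p q, dist (cl p) (cl q) ≤ dist p q := by
    intro p q
    rw [Prod.dist_eq, Prod.dist_eq]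
    apply max_le_max <;> rw [Real.dist_eq, Real.dist_eq] <;>
      exact le_trans (lipMax _ _ _) (lipMin _ _ _)
  set F : ℝ × ℝ → ℂ := fun p => F₀ (cl p) with hFdef
  have hF : Continuous F := hF₀.comp hclcont
  have hFne : ∀ p, F p ≠ 0 := fun p => hF₀0 _
  have hFeq : ∀ p ∈ Q, F p = F₀ p := fun p hp => by rw [hFdef]; simp only; rw [hclid p hp]
  have hQc : IsCompact Q := isCompact_Icc.prod isCompact_Icc
  have hQne : Q.Nonempty := ⟨(0,0), ⟨⟨le_refl 0, by norm_num⟩, ⟨le_refl 0, by norm_num⟩⟩⟩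
  obtain ⟨pm, hpmQ, hpm⟩ := hQc.exists_isMinOn hQne ((continuous_norm.comp hF₀).continuousOn)
  set m : ℝ := ‖F₀ pm‖ with hm
  have hmpos : 0 < m := norm_pos_iff.mpr (hF₀0 pm)
  have hlow : ∀ p, m ≤ ‖F p‖ := fun p => isMinOn_iff.mp hpm _ (hclQ p)
  have huc := hQc.uniformContinuousOn_of_continuous hF₀.continuousOn
  rw [Metric.uniformContinuousOn_iff] at huc
  obtain ⟨δ, hδpos, hδ⟩ := huc m hmpos
  have hmod : ∀ p q : ℝ × ℝ, dist p q ≤ δ/2 → ‖F p - F q‖ < m := by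
    intro p q hpq
    have h1 : dist (cl p) (cl q) < δ := lt_of_le_of_lt (le_trans (hcllip p q) hpq) (by linarith)
    have h2 := hδ (cl p) (hclQ p) (cl q) (hclQ q) h1
    rw [Complex.dist_eq] at h2
    exact h2
  obtain ⟨L, hLc, hLexp⟩ :=
    exists_log_lift F hF hFne hmpos (by linarith : (0:ℝ) < δ/2) hlow hmod
  have hexp : ∀ s t : ℝ, s ∈ Set.Icc (0:ℝ) 1 → t ∈ Set.Icc (0:ℝ) 2 →
      Complex.exp (L (s, t)) = F₀ (s, t) := by
    intro s t hs ht
    rw [hLexp s t hs ht]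
    exact hFeq (s,t) ⟨hs, ht⟩
  have mem01 : ∀ {x : ℝ}, x ∈ Set.Icc (0:ℝ) 1 → x ∈ Set.Icc (0:ℝ) 2 :=
    fun hx => ⟨hx.1, by linarith [hx.2]⟩
  have h0mem1 : (0:ℝ) ∈ Set.Icc (0:ℝ) 1 := ⟨le_refl 0, by norm_num⟩
  have h0mem2 : (0:ℝ) ∈ Set.Icc (0:ℝ) 2 := ⟨le_refl 0, by norm_num⟩
  have h2mem : (2:ℝ) ∈ Set.Icc (0:ℝ) 2 := ⟨by norm_num, le_refl 2⟩
  have hhalf : (1/2 : ℝ) ∈ Set.Icc (0:ℝ) 1 := ⟨by norm_num, by norm_num⟩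
  have imcalc : ∀ k : ℤ, (((k:ℂ)) * (2 * (π:ℂ) * Complex.I)).im = k * (2*π) := by
    intro k
    simp [Complex.mul_im]
  have pcalc : ((π:ℂ) * Complex.I).im = π := by simp
  have pipos := Real.pi_pos
  -- the winding comparison function u
  set u : ℝ → ℝ := fun s => (L (s, 2) - L (s, 0)).im / (2*π) with hu
  have hupi : ∀ s ∈ Set.Icc (0:ℝ) 1, ∃ k : ℤ,
      (L (s,2) - L (s,0)) = (k:ℂ) * (2*(π:ℂ)*Complex.I) ∧ u s = k := by
    intro s hs
    have he : Complex.exp (L (s,2) - L (s,0)) = 1 := by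
      rw [Complex.exp_sub, hexp s 2 hs h2mem, hexp s 0 hs h0mem2]
      have h := hper s 0
      norm_num at h
      rw [h, div_self (hF₀0 _)]
    obtain ⟨k, hk⟩ := Complex.exp_eq_one_iff.mp he
    refine ⟨k, hk, ?_⟩
    rw [hu]
    simp only
    rw [hk, imcalc]
    field_simp
  have hucont : ContinuousOn u (Set.Icc 0 1) := by
    apply Continuous.continuousOn
    apply Continuous.div_const
    exact Complex.continuous_im.comp
      ((hLc.comp (continuous_id.prodMk continuous_const)).sub
       (hLc.comp (continuous_id.prodMk continuous_const)))
  set v : ℝ → ℝ := fun t => (L (0,t) - L (0,0)).im / (2*π) with hv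
  have hvpi : ∀ t ∈ Set.Icc (0:ℝ) 2, ∃ k : ℤ, v t = k := by
    intro t ht
    have he : Complex.exp (L (0,t) - L (0,0)) = 1 := by
      rw [Complex.exp_sub, hexp 0 t h0mem1 ht, hexp 0 0 h0mem1 h0mem2,
        hnorth t, div_self (hF₀0 _)]
    obtain ⟨k, hk⟩ := Complex.exp_eq_one_iff.mp he
    refine ⟨k, ?_⟩
    rw [hv]
    simp only
    rw [hk, imcalc]
    field_simp
  have hvcont : ContinuousOn v (Set.Icc 0 2) := by
    apply Continuous.continuousOn
    apply Continuous.div_const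
    exact Complex.continuous_im.comp
      ((hLc.comp (continuous_const.prodMk continuous_id)).sub continuous_const)
  have hv0 : v 0 = 0 := by rw [hv]; simp
  have hv2 : v 2 = 0 := by
    have h := intval_eq (by norm_num : (0:ℝ) ≤ 2) hvcont hvpi
    linarith [hv0]
  have hu0 : u 0 = 0 := hv2
  have hsub : Set.Icc (0:ℝ) (1/2) ⊆ Set.Icc (0:ℝ) 1 :=
    fun x hx => ⟨hx.1, by linarith [hx.2]⟩
  have hu12 : u (1/2) = 0 := by
    have h := intval_eq (by norm_num : (0:ℝ) ≤ 1/2) (hucont.mono hsub)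
      (fun x hx => (hupi x (hsub hx)).elim fun k hk => ⟨k, hk.2⟩)
    linarith [hu0]
  have hD : L (1/2, 2) = L (1/2, 0) := by
    obtain ⟨k, hk1, hk2⟩ := hupi (1/2) hhalf
    rw [hu12] at hk2
    have hk3 : (k:ℝ) = 0 := by linarith
    have hk0 : k = 0 := by exact_mod_cast hk3
    rw [hk0] at hk1
    norm_num at hk1
    exact sub_eq_zero.mp hk1
  -- the odd-jump function w
  set w : ℝ → ℝ := fun t => ((L (1/2, t+1) - L (1/2, t)).im - π) / (2*π) with hw
  have hwpi : ∀ t ∈ Set.Icc (0:ℝ) 1, ∃ k : ℤ,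
      (L (1/2, t+1) - L (1/2, t)) = (k:ℂ) * (2*(π:ℂ)*Complex.I) + (π:ℂ)*Complex.I
      ∧ w t = k := by
    intro t ht
    have ht2 : t + 1 ∈ Set.Icc (0:ℝ) 2 := ⟨by linarith [ht.1], by linarith [ht.2]⟩
    have hneg : Complex.exp (L (1/2, t+1) - L (1/2, t)) = -1 := by
      rw [Complex.exp_sub, hexp (1/2) (t+1) hhalf ht2, hexp (1/2) t hhalf (mem01 ht)]
      have h := hoddF (1/2) t
      norm_num at h
      rw [h, neg_div, div_self (hF₀0 _)]
    have he : Complex.exp (L (1/2, t+1) - L (1/2, t) - (π:ℂ)*Complex.I) = 1 := by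
      rw [Complex.exp_sub, hneg, Complex.exp_pi_mul_I]
      norm_num
    obtain ⟨k, hk⟩ := Complex.exp_eq_one_iff.mp he
    have hfull : L (1/2, t+1) - L (1/2, t) = (k:ℂ)*(2*(π:ℂ)*Complex.I) + (π:ℂ)*Complex.I :=
      sub_eq_iff_eq_add.mp hk
    refine ⟨k, hfull, ?_⟩
    rw [hw]
    simp only
    rw [hfull, Complex.add_im, imcalc, pcalc]
    field_simp
    ring
  have hwcont : ContinuousOn w (Set.Icc 0 1) := by
    apply Continuous.continuousOn
    apply Continuous.div_const
    apply Continuous.sub _ continuous_const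
    exact Complex.continuous_im.comp
      ((hLc.comp (continuous_const.prodMk (continuous_id.add continuous_const))).sub
       (hLc.comp (continuous_const.prodMk continuous_id)))
  have hw01 := intval_eq (by norm_num : (0:ℝ) ≤ 1) hwcont
    (fun x hx => (hwpi x hx).elim fun k hk => ⟨k, hk.2⟩)
  obtain ⟨k0, hk0full, hk0val⟩ := hwpi 0 ⟨le_refl 0, by norm_num⟩
  obtain ⟨k1, hk1full, hk1val⟩ := hwpi 1 ⟨by norm_num, le_refl 1⟩
  have hcast : (k0:ℝ) = k1 := by rw [← hk0val, ← hk1val, hw01]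
  have hkk : k0 = k1 := by exact_mod_cast hcast
  have hsum : (L (1/2, 0+1) - L (1/2, 0)) + (L (1/2, 1+1) - L (1/2, 1)) = 0 := by
    rw [show (0:ℝ)+1 = 1 by norm_num, show (1:ℝ)+1 = 2 by norm_num, hD]
    ring
  rw [hk0full, hk1full, hkk] at hsum
  have him := congrArg Complex.im hsum
  simp only [Complex.add_im, imcalc, pcalc] at him
  norm_num at him
  -- him : k1 * (2π) + π + (k1 * (2π) + π) = 0  (roughly)
  have hk1r : (k1:ℝ) = -1 + 1/2 := by nlinarith [him, pipos]
  exact half_not_int (-1) k1 (by push_cast at hk1r ⊢; linarith)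

lemma no_odd_nonvanishing
    (z : Metric.sphere (0 : EuclideanSpace ℝ (Fin 3)) 1 → ℂ)
    (hz : Continuous z) (h0 : ∀ x, z x ≠ 0) (hodd : ∀ x, z (-x) = -z x) : False := by
  classical
  -- the parametrization of the sphere
  set σ₀ : ℝ × ℝ → EuclideanSpace ℝ (Fin 3) := fun p =>
    (WithLp.equiv 2 (Fin 3 → ℝ)).symm
      ![Real.sin (π * p.1) * Real.cos (π * p.2),
        Real.sin (π * p.1) * Real.sin (π * p.2),
        Real.cos (π * p.1)] with hσ₀
  have hmem : ∀ p : ℝ × ℝ, σ₀ p ∈ Metric.sphere (0 : EuclideanSpace ℝ (Fin 3)) 1 := by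
    intro p
    rw [mem_sphere_zero_iff_norm, EuclideanSpace.norm_eq]
    rw [hσ₀]
    simp only [WithLp.equiv_symm_apply, PiLp.toLp_apply, Fin.sum_univ_three, Matrix.cons_val_zero,
      Matrix.cons_val_one, Matrix.head_cons, Matrix.cons_val_two, Matrix.tail_cons,
      Real.norm_eq_abs, sq_abs]
    rw [Real.sqrt_eq_one]
    have h1 := Real.sin_sq_add_cos_sq (π * p.1)
    have h2 := Real.sin_sq_add_cos_sq (π * p.2)
    nlinarith [h1, h2]
  set σ : ℝ × ℝ → Metric.sphere (0 : EuclideanSpace ℝ (Fin 3)) 1 := fun p => ⟨σ₀ p, hmem p⟩ with hσ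
  have hσ₀cont : Continuous σ₀ := by
    rw [hσ₀]
    apply Continuous.comp
    · exact (PiLp.continuousLinearEquiv 2 ℝ (fun _ : Fin 3 => ℝ)).symm.continuous
    · apply continuous_pi
      intro i
      fin_cases i <;> simp <;> fun_prop
  have hσcont : Continuous σ := hσ₀cont.subtype_mk _
  set F₀ : ℝ × ℝ → ℂ := fun p => z (σ p) with hF₀def
  have hF₀ : Continuous F₀ := hz.comp hσcont
  have hF₀0 : ∀ p, F₀ p ≠ 0 := fun p => h0 _
  -- identities
  have hper : ∀ s t : ℝ, F₀ (s, t + 2) = F₀ (s, t) := by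
    intro s t
    have : σ₀ (s, t + 2) = σ₀ (s, t) := by
      rw [hσ₀]
      simp only
      congr 1
      funext i
      have e1 : π * (t + 2) = π * t + 2 * π := by ring
      fin_cases i <;> simp [e1, Real.cos_add_two_pi, Real.sin_add_two_pi]
    simp only [hF₀def, hσ]
    congr 1
    exact Subtype.ext this
  have hoddF : ∀ s t : ℝ, F₀ (1 - s, t + 1) = -F₀ (s, t) := by
    intro s t
    have key : σ₀ (1 - s, t + 1) = -σ₀ (s, t) := by
      rw [hσ₀]
      apply PiLp.ext
      intro i
      rw [PiLp.neg_apply]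
      simp only [WithLp.equiv_symm_apply, PiLp.toLp_apply]
      have e1 : π * (1 - s) = π - π * s := by ring
      have e2 : π * (t + 1) = π * t + π := by ring
      fin_cases i <;>
        simp [e1, e2, Real.sin_pi_sub, Real.cos_pi_sub, Real.cos_add_pi, Real.sin_add_pi] <;>
        ring
    have : σ (1 - s, t + 1) = -σ (s, t) := Subtype.ext (by rw [hσ]; exact key)
    simp only [hF₀def]
    rw [this, hodd]
  have hnorth : ∀ t : ℝ, F₀ (0, t) = F₀ (0, 0) := by
    intro t
    have : σ₀ (0, t) = σ₀ (0, 0) := by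
      rw [hσ₀]
      simp only
      congr 1
      funext i
      fin_cases i <;> simp
    simp only [hF₀def, hσ]
    congr 1
    exact Subtype.ext this
  exact no_odd_core F₀ hF₀ hF₀0 hper hoddF hnorth

end BorsukUlamAux

/-- Every antipode-preserving continuous self-map of the 2-sphere is surjective. -/
theorem odd_S2_map_surjective
    (g : Metric.sphere (0 : EuclideanSpace ℝ (Fin 3)) 1 →
        Metric.sphere (0 : EuclideanSpace ℝ (Fin 3)) 1)
    (hg : Continuous g) (hodd : ∀ s, g (-s) = -g s) :
    Function.Surjective g := by
  by_contra hsurj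
  rw [Function.Surjective] at hsurj
  push_neg at hsurj
  obtain ⟨p', hp'⟩ := hsurj
  set E := EuclideanSpace ℝ (Fin 3)
  set p : E := (p' : E) with hpdef
  have hpnorm : ‖p‖ = 1 := mem_sphere_zero_iff_norm.mp p'.2
  have hp0 : p ≠ 0 := by
    intro h
    rw [h, norm_zero] at hpnorm
    norm_num at hpnorm
  set sub : Submodule ℝ E := (ℝ ∙ p)ᗮ with hsubdef
  have hrank : Module.finrank ℝ sub = 2 := by
    have h1 := Submodule.finrank_add_finrank_orthogonal (𝕜 := ℝ) (Submodule.span ℝ {p})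
    rw [finrank_span_singleton hp0, finrank_euclideanSpace_fin] at h1
    rw [hsubdef]
    omega
  set b : OrthonormalBasis (Fin 2) ℝ sub :=
    (stdOrthonormalBasis ℝ sub).reindex (finCongr hrank) with hbdef
  set V : Metric.sphere (0 : E) 1 → sub :=
    fun x => sub.orthogonalProjectionOnto ((g x : E)) with hVdef
  have hVcont : Continuous V :=
    (sub.orthogonalProjectionOnto).continuous.comp (continuous_subtype_val.comp hg)
  have hVodd : ∀ x, V (-x) = -V x := by
    intro x
    rw [hVdef]
    simp only
    rw [hodd x]
    have : ((-g x : Metric.sphere (0:E) 1) : E) = -((g x : E)) := rfl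
    rw [this, map_neg]
  have hV0 : ∀ x, V x ≠ 0 := by
    intro x hx
    have hmem : (g x : E) ∈ subᗮ := Submodule.orthogonalProjectionOnto_eq_zero_iff.mp hx
    rw [hsubdef, Submodule.orthogonal_orthogonal] at hmem
    obtain ⟨c, hc⟩ := Submodule.mem_span_singleton.mp hmem
    have hnc : ‖(g x : E)‖ = 1 := mem_sphere_zero_iff_norm.mp (g x).2
    rw [← hc, norm_smul, hpnorm, mul_one, Real.norm_eq_abs] at hnc
    rcases abs_eq (by norm_num : (0:ℝ) ≤ 1) |>.mp hnc with h1 | h1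
    · rw [h1, one_smul] at hc
      exact hp' x (Subtype.ext hc.symm)
    · rw [h1] at hc
      have hgx : (g (-x) : E) = p := by
        rw [hodd x]
        have : ((-g x : Metric.sphere (0:E) 1) : E) = -((g x : E)) := rfl
        rw [this, ← hc]
        simp
      exact hp' (-x) (Subtype.ext hgx)
  set z : Metric.sphere (0 : E) 1 → ℂ :=
    fun x => ((b.repr (V x) 0 : ℝ) : ℂ) + ((b.repr (V x) 1 : ℝ) : ℂ) * Complex.I with hzdef
  have hcoord : Continuous fun x => b.repr (V x) := b.repr.continuous.comp hVcont
  have hzc : Continuous z := by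
    rw [hzdef]
    apply Continuous.add
    · exact Complex.continuous_ofReal.comp ((EuclideanSpace.proj (0 : Fin 2)).continuous.comp hcoord)
    · exact (Complex.continuous_ofReal.comp
        ((EuclideanSpace.proj (1 : Fin 2)).continuous.comp hcoord)).mul continuous_const
  have hz0 : ∀ x, z x ≠ 0 := by
    intro x hzx
    rw [hzdef] at hzx
    simp only at hzx
    have h0' : b.repr (V x) 0 = 0 ∧ b.repr (V x) 1 = 0 := by
      have hre := congrArg Complex.re hzx
      have him := congrArg Complex.im hzx
      simp [Complex.add_re, Complex.add_im, Complex.mul_re, Complex.mul_im] at hre him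
      exact ⟨hre, him⟩
    have : V x = 0 := by
      rw [← b.sum_repr (V x), Fin.sum_univ_two, h0'.1, h0'.2]
      simp
    exact hV0 x this
  have hzodd : ∀ x, z (-x) = -z x := by
    intro x
    rw [hzdef]
    simp only
    rw [hVodd x, map_neg]
    have e0 : (-(b.repr (V x)) : EuclideanSpace ℝ (Fin 2)) 0 = -(b.repr (V x) 0) :=
      PiLp.neg_apply _ _ _
    have e1 : (-(b.repr (V x)) : EuclideanSpace ℝ (Fin 2)) 1 = -(b.repr (V x) 1) :=
      PiLp.neg_apply _ _ _
    rw [e0, e1]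
    push_cast
    ring
  exact no_odd_nonvanishing z hzc hz0 hzodd
end

section
/- (Non-triviality of γ⊕γ⊕ε over ℝP², concrete form) There is no continuous matrix-valued map Ω : S² → Matrix (Fin 3) (Fin 3) ℝ such that Ω(s) is invertible for every s ∈ S², the entries in the first two columns are odd functions (Ω(-s)ᵢⱼ = -Ω(s)ᵢⱼ for j = 0, 1), and the entries in the third column are even functions (Ω(-s)ᵢ₂ = Ω(s)ᵢ₂), for all s ∈ S² and all rows i. -/
noncomputable section

open Metric

namespace NoOddFrame

abbrev Hq := Quaternion ℝ

def purq (v : Fin 3 → ℝ) : Hq := ⟨0, v 0, v 1, v 2⟩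
def dot3 (u v : Fin 3 → ℝ) : ℝ := u 0 * v 0 + u 1 * v 1 + u 2 * v 2
def cross3 (u v : Fin 3 → ℝ) : Fin 3 → ℝ :=
  ![u 1 * v 2 - u 2 * v 1, u 2 * v 0 - u 0 * v 2, u 0 * v 1 - u 1 * v 0]

lemma cross3_apply0 (u v : Fin 3 → ℝ) : cross3 u v 0 = u 1 * v 2 - u 2 * v 1 := rfl
lemma cross3_apply1 (u v : Fin 3 → ℝ) : cross3 u v 1 = u 2 * v 0 - u 0 * v 2 := rfl
lemma cross3_apply2 (u v : Fin 3 → ℝ) : cross3 u v 2 = u 0 * v 1 - u 1 * v 0 := rfl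

lemma purq_sq {u : Fin 3 → ℝ} (h : dot3 u u = 1) : purq u * purq u = -1 := by
  simp only [dot3] at h
  ext <;> simp only [Quaternion.re_mul, Quaternion.imI_mul, Quaternion.imJ_mul,
    Quaternion.imK_mul] <;> simp [purq, Quaternion.re_one, Quaternion.imI_one, Quaternion.imJ_one, Quaternion.imK_one] <;> linarith

lemma purq_anticomm {u v : Fin 3 → ℝ} (h : dot3 u v = 0) :
    purq v * purq u = -(purq u * purq v) := by
  simp only [dot3] at h
  ext <;> simp only [Quaternion.re_neg, Quaternion.imI_neg, Quaternion.imJ_neg, Quaternion.imK_neg, Quaternion.re_mul, Quaternion.imI_mul, Quaternion.imJ_mul,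
    Quaternion.imK_mul] <;> simp [purq] <;> linarith [h]

lemma purq_mul_eq_cross {u v : Fin 3 → ℝ} (h : dot3 u v = 0) :
    purq u * purq v = purq (cross3 u v) := by
  simp only [dot3] at h
  ext <;> simp only [Quaternion.re_mul, Quaternion.imI_mul, Quaternion.imJ_mul, Quaternion.imK_mul] <;>
    simp [purq, cross3_apply0, cross3_apply1, cross3_apply2, cross3] <;> linarith

lemma dot3_cross_left (u v : Fin 3 → ℝ) : dot3 (cross3 u v) u = 0 := by
  simp [dot3, cross3]; ring

lemma dot3_cross_right (u v : Fin 3 → ℝ) : dot3 (cross3 u v) v = 0 := by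
  simp [dot3, cross3]; ring

lemma dot3_cross_self {u v : Fin 3 → ℝ} (hu : dot3 u u = 1) (hv : dot3 v v = 1)
    (huv : dot3 u v = 0) : dot3 (cross3 u v) (cross3 u v) = 1 := by
  have : dot3 (cross3 u v) (cross3 u v) = dot3 u u * dot3 v v - dot3 u v * dot3 u v := by
    simp [dot3, cross3]; ring
  rw [this, hu, hv, huv]; ring



lemma purq_smul (c : ℝ) (v : Fin 3 → ℝ) : purq (c • v) = c • purq v := by
  ext <;> simp only [Quaternion.re_smul, Quaternion.imI_smul, Quaternion.imJ_smul, Quaternion.imK_smul] <;> simp [purq]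

lemma purq_add (u v : Fin 3 → ℝ) : purq (u + v) = purq u + purq v := by
  ext <;> simp only [Quaternion.re_add, Quaternion.imI_add, Quaternion.imJ_add, Quaternion.imK_add] <;> simp [purq]

lemma purq_neg (v : Fin 3 → ℝ) : purq (-v) = -purq v := by
  ext <;> simp only [Quaternion.re_neg, Quaternion.imI_neg, Quaternion.imJ_neg, Quaternion.imK_neg] <;> simp [purq]

lemma dot3_comm (u v : Fin 3 → ℝ) : dot3 u v = dot3 v u := by simp [dot3]; ring

lemma commutant {a b : Fin 3 → ℝ} (haa : dot3 a a = 1) (hbb : dot3 b b = 1)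
    (hab : dot3 a b = 0) {x : Hq} (h1 : x * purq a = purq a * x)
    (h2 : x * purq b = purq b * x)
    (h3 : x * purq (cross3 a b) = purq (cross3 a b) * x) : x = ((x.re : ℝ) : Hq) := by
  set n := cross3 a b with hn
  have hnn : dot3 n n = 1 := dot3_cross_self haa hbb hab
  have hna : dot3 n a = 0 := dot3_cross_left a b
  have hnb : dot3 n b = 0 := dot3_cross_right a b
  -- matrix of the frame
  set M : Matrix (Fin 3) (Fin 3) ℝ := Matrix.of (fun m i => ![a, b, n] m i) with hM
  have hMMt : M * M.transpose = 1 := by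
    ext m m'
    fin_cases m <;> fin_cases m' <;>
      simp [hM, Matrix.mul_apply, Fin.sum_univ_three, Matrix.one_apply] <;>
      simp only [dot3] at haa hbb hab hnn hna hnb <;> linarith [dot3_comm a b]
  have hMtM := mul_eq_one_comm.mp hMMt
  have hij : ∀ i j : Fin 3, a i * a j + b i * b j + n i * n j
      = (if i = j then (1:ℝ) else 0) := by
    intro i j
    have := congrFun (congrFun hMtM i) j
    simpa [hM, Matrix.mul_apply, Fin.sum_univ_three, Matrix.one_apply] using this
  have q00 : a 0 * a 0 + b 0 * b 0 + n 0 * n 0 = 1 := by simpa using hij 0 0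
  have q11 : a 1 * a 1 + b 1 * b 1 + n 1 * n 1 = 1 := by simpa using hij 1 1
  have q22 : a 2 * a 2 + b 2 * b 2 + n 2 * n 2 = 1 := by simpa using hij 2 2
  have q01 : a 0 * a 1 + b 0 * b 1 + n 0 * n 1 = 0 := by simpa using hij 0 1
  have q02 : a 0 * a 2 + b 0 * b 2 + n 0 * n 2 = 0 := by simpa using hij 0 2
  have q12 : a 1 * a 2 + b 1 * b 2 + n 1 * n 2 = 0 := by simpa using hij 1 2
  have q10 : a 1 * a 0 + b 1 * b 0 + n 1 * n 0 = 0 := by simpa using hij 1 0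
  have q20 : a 2 * a 0 + b 2 * b 0 + n 2 * n 0 = 0 := by simpa using hij 2 0
  have q21 : a 2 * a 1 + b 2 * b 1 + n 2 * n 1 = 0 := by simpa using hij 2 1
  have spanning : ∀ (v : Fin 3 → ℝ),
      v = dot3 v a • a + dot3 v b • b + dot3 v n • n := by
    intro v
    funext j
    fin_cases j
    · show v 0 = (dot3 v a • a + dot3 v b • b + dot3 v n • n) 0
      simp only [Pi.add_apply, Pi.smul_apply, smul_eq_mul, dot3]
      linear_combination -(v 0 * q00 + v 1 * q10 + v 2 * q20)
    · show v 1 = (dot3 v a • a + dot3 v b • b + dot3 v n • n) 1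
      simp only [Pi.add_apply, Pi.smul_apply, smul_eq_mul, dot3]
      linear_combination -(v 0 * q01 + v 1 * q11 + v 2 * q21)
    · show v 2 = (dot3 v a • a + dot3 v b • b + dot3 v n • n) 2
      simp only [Pi.add_apply, Pi.smul_apply, smul_eq_mul, dot3]
      linear_combination -(v 0 * q02 + v 1 * q12 + v 2 * q22)
  have hall : ∀ v : Fin 3 → ℝ, x * purq v = purq v * x := by
    intro v
    have hv : purq v = dot3 v a • purq a + dot3 v b • purq b + dot3 v n • purq n := by
      rw [← purq_smul, ← purq_smul, ← purq_smul, ← purq_add, ← purq_add, ← spanning v]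
    rw [hv]
    simp only [mul_add, add_mul, mul_smul_comm, smul_mul_assoc, h1, h2, h3]
  have c0 := hall ![1,0,0]
  have c1 := hall ![0,1,0]
  have e0 : purq ![1,0,0] = (⟨0,1,0,0⟩ : Hq) := by ext <;> simp [purq]
  have e1 : purq ![0,1,0] = (⟨0,0,1,0⟩ : Hq) := by ext <;> simp [purq]
  rw [Quaternion.ext_iff] at c0 c1
  simp only [Quaternion.re_mul, Quaternion.imI_mul, Quaternion.imJ_mul, Quaternion.imK_mul] at c0 c1
  rw [e0] at c0
  rw [e1] at c1
  simp at c0 c1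
  obtain ⟨k1, j1⟩ := c0
  obtain ⟨-, i1⟩ := c1
  ext
  · simp
  · simp only [Quaternion.imI_coe]; linarith
  · simp only [Quaternion.imJ_coe]; linarith
  · simp only [Quaternion.imK_coe]; linarith


section Intertwine
variable {A B R S : Hq}

lemma intertwine (hA : A*A = -1) (hB : B*B = -1) (hBA : B*A = -(A*B))
    (hR : R*R = -1) (hS : S*S = -1) (hSR : S*R = -(R*S)) :
    ((1 - (R*A + S*B + R*S*(A*B))) * A = R * (1 - (R*A + S*B + R*S*(A*B)))) ∧
    ((1 - (R*A + S*B + R*S*(A*B))) * B = S * (1 - (R*A + S*B + R*S*(A*B)))) ∧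
    ((1 - (R*A + S*B + R*S*(A*B))) * (A*B) = (R*S) * (1 - (R*A + S*B + R*S*(A*B)))) := by
  have hABA : (A*B)*A = B := by
    calc (A*B)*A = A*(B*A) := by noncomm_ring
      _ = A*(-(A*B)) := by rw [hBA]
      _ = -((A*A)*B) := by noncomm_ring
      _ = B := by rw [hA]; noncomm_ring
  have hABB : (A*B)*B = -A := by
    calc (A*B)*B = A*(B*B) := by noncomm_ring
      _ = -A := by rw [hB]; noncomm_ring
  have hAB2 : (A*B)*(A*B) = -1 := by
    calc (A*B)*(A*B) = ((A*B)*A)*B := by noncomm_ring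
      _ = B*B := by rw [hABA]
      _ = -1 := hB
  have hRS2 : (R*S)*(R*S) = -1 := by
    have hRSR : (R*S)*R = S := by
      calc (R*S)*R = R*(S*R) := by noncomm_ring
        _ = R*(-(R*S)) := by rw [hSR]
        _ = -((R*R)*S) := by noncomm_ring
        _ = S := by rw [hR]; noncomm_ring
    calc (R*S)*(R*S) = ((R*S)*R)*S := by noncomm_ring
      _ = S*S := by rw [hRSR]
      _ = -1 := hS
  refine ⟨?_, ?_, ?_⟩
  · have l : (1 - (R*A + S*B + R*S*(A*B))) * A
        = A - (R*(A*A) + S*(B*A) + (R*S)*((A*B)*A)) := by noncomm_ring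
    have r : R * (1 - (R*A + S*B + R*S*(A*B)))
        = R - ((R*R)*A + (R*S)*B + (R*R)*(S*(A*B))) := by noncomm_ring
    rw [l, r, hA, hBA, hABA, hR]; noncomm_ring
  · have l : (1 - (R*A + S*B + R*S*(A*B))) * B
        = B - (R*(A*B) + S*(B*B) + (R*S)*((A*B)*B)) := by noncomm_ring
    have r : S * (1 - (R*A + S*B + R*S*(A*B)))
        = S - ((S*R)*A + (S*S)*B + ((S*R)*S)*(A*B)) := by noncomm_ring
    have k : ((-(R*S))*S)*(A*B) = -(R*((S*S)*(A*B))) := by noncomm_ring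
    rw [l, r, hB, hABB, hSR, k, hS]; noncomm_ring
  · have hRSR : (R*S)*R = S := by
      calc (R*S)*R = R*(S*R) := by noncomm_ring
        _ = R*(-(R*S)) := by rw [hSR]
        _ = -((R*R)*S) := by noncomm_ring
        _ = S := by rw [hR]; noncomm_ring
    have y2 : (S*B)*(A*B) = S*A := by
      calc (S*B)*(A*B) = S*((B*A)*B) := by noncomm_ring
        _ = S*((-(A*B))*B) := by rw [hBA]
        _ = -(S*((A*B)*B)) := by noncomm_ring
        _ = -(S*(-A)) := by rw [hABB]
        _ = S*A := by noncomm_ring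
    have l : (1 - (R*A + S*B + R*S*(A*B))) * (A*B)
        = A*B - (R*((A*A)*B) + (S*B)*(A*B) + (R*S)*((A*B)*(A*B))) := by noncomm_ring
    have r : (R*S) * (1 - (R*A + S*B + R*S*(A*B)))
        = R*S - (((R*S)*R)*A + R*((S*S)*B) + ((R*S)*(R*S))*(A*B)) := by noncomm_ring
    rw [l, r, hA, y2, hAB2, hRSR, hS, hRS2]; noncomm_ring

end Intertwine

lemma continuous_purq {X : Type*} [TopologicalSpace X] {f : X → Fin 3 → ℝ}
    (hf : Continuous f) : Continuous fun x => purq (f x) := by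
  have h : ∀ x, purq (f x) = f x 0 • (⟨0,1,0,0⟩ : Hq) + f x 1 • (⟨0,0,1,0⟩ : Hq)
      + f x 2 • (⟨0,0,0,1⟩ : Hq) := by
    intro x; ext <;> simp [purq]
  simp only [h]
  have c : ∀ i : Fin 3, Continuous fun x => f x i := fun i => (continuous_apply i).comp hf
  exact (((c 0).smul continuous_const).add ((c 1).smul continuous_const)).add
    ((c 2).smul continuous_const)


abbrev E2 := EuclideanSpace ℝ (Fin 2)
abbrev S2 := Metric.sphere (0 : EuclideanSpace ℝ (Fin 3)) 1
abbrev DD : Type := Metric.closedBall (0 : E2) 1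

instance : CompactSpace DD := isCompact_iff_compactSpace.mp (isCompact_closedBall _ _)

lemma e2_norm_sq (x : E2) : ‖x‖^2 = x 0^2 + x 1^2 := by
  rw [EuclideanSpace.norm_eq, Real.sq_sqrt (by positivity)]
  simp [Fin.sum_univ_two, Real.norm_eq_abs, sq_abs]

def phiv (p : E2) : EuclideanSpace ℝ (Fin 3) := WithLp.toLp 2 (fun i => ![p 0, p 1, Real.sqrt (1 - ‖p‖^2)] i)

lemma phiv_norm {p : E2} (hp : ‖p‖ ≤ 1) : ‖phiv p‖ = 1 := by
  have h1 : 1 - ‖p‖^2 ≥ 0 := by nlinarith [norm_nonneg p]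
  rw [EuclideanSpace.norm_eq]
  have : ∑ i, ‖phiv p i‖^2 = p 0^2 + p 1^2 + (Real.sqrt (1 - ‖p‖^2))^2 := by
    simp [Fin.sum_univ_three, phiv, Real.norm_eq_abs, sq_abs]
  rw [this, Real.sq_sqrt h1, ← e2_norm_sq]
  simp

def PhiD (p : DD) : S2 :=
  ⟨phiv p, by
    rw [mem_sphere_zero_iff_norm]
    exact phiv_norm (by simpa [dist_zero_right] using mem_closedBall.mp p.2)⟩

lemma continuous_coord (i : Fin 2) : Continuous fun x : E2 => x i :=
  (continuous_apply i).comp (PiLp.continuous_ofLp _ _)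

lemma continuous_coord3 (i : Fin 3) : Continuous fun x : EuclideanSpace ℝ (Fin 3) => x i :=
  (continuous_apply i).comp (PiLp.continuous_ofLp _ _)

lemma continuous_phiv : Continuous phiv := by
  have : Continuous fun p : E2 => (![p 0, p 1, Real.sqrt (1 - ‖p‖^2)] : Fin 3 → ℝ) := by
    apply continuous_pi
    intro i
    fin_cases i
    · exact continuous_coord 0
    · exact continuous_coord 1
    · exact Real.continuous_sqrt.comp (continuous_const.sub (continuous_norm.pow 2))
  exact (PiLp.continuous_toLp _ _).comp this

lemma continuous_PhiD : Continuous PhiD :=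
  Continuous.subtype_mk (continuous_phiv.comp continuous_subtype_val) _

lemma sck_mem (c : ℝ) (p : DD) : (max 0 (min c 1)) • (p : E2) ∈ closedBall (0:E2) 1 := by
  rw [mem_closedBall_zero_iff, norm_smul]
  have h1 : |max 0 (min c 1)| ≤ 1 := by
    rw [abs_le]; constructor
    · linarith [le_max_left 0 (min c 1)]
    · exact max_le zero_le_one (min_le_right _ _)
  have h2 : ‖(p:E2)‖ ≤ 1 := by simpa [dist_zero_right] using mem_closedBall.mp p.2
  calc |max 0 (min c 1)| * ‖(p:E2)‖ ≤ 1 * 1 := by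
        apply mul_le_mul h1 h2 (norm_nonneg _) zero_le_one
    _ = 1 := by norm_num

def sck (k N : ℕ) (p : DD) : DD := ⟨(max 0 (min ((k:ℝ)/(N:ℝ)) 1)) • (p : E2), sck_mem _ p⟩

def ctr : DD := ⟨0, by simp⟩

lemma sck_zero (N : ℕ) (p : DD) : sck 0 N p = ctr := by
  apply Subtype.ext
  simp [sck, ctr]

lemma sck_self (N : ℕ) (hN : N ≠ 0) (p : DD) : sck N N p = p := by
  apply Subtype.ext
  have : (N:ℝ)/(N:ℝ) = 1 := div_self (by exact_mod_cast hN)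
  simp [sck, this]

lemma continuous_sck (k N : ℕ) : Continuous (sck k N) :=
  Continuous.subtype_mk ((continuous_const (y := max 0 (min ((k:ℝ)/(N:ℝ)) 1))).smul continuous_subtype_val) _

lemma sck_dist {k N : ℕ} (hk : k + 1 ≤ N) (p : DD) :
    dist (sck k N p) (sck (k+1) N p) ≤ 1/(N:ℝ) := by
  have hN : 0 < (N:ℝ) := by exact_mod_cast Nat.pos_of_ne_zero (by omega)
  have hk1 : ((k:ℝ))/(N:ℝ) ≤ 1 := by
    rw [div_le_one hN]; exact_mod_cast Nat.le_of_succ_le hk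
  have hk2 : (((k+1:ℕ)):ℝ)/(N:ℝ) ≤ 1 := by
    rw [div_le_one hN]; exact_mod_cast hk
  have e1 : max 0 (min ((k:ℝ)/(N:ℝ)) 1) = (k:ℝ)/(N:ℝ) := by
    rw [min_eq_left hk1, max_eq_right (by positivity)]
  have e2 : max 0 (min (((k+1:ℕ):ℝ)/(N:ℝ)) 1) = ((k+1:ℕ):ℝ)/(N:ℝ) := by
    rw [min_eq_left hk2, max_eq_right (by positivity)]
  have v1 : ((sck k N p : DD) : E2) = ((k:ℝ)/(N:ℝ)) • (p:E2) := by
    show (max 0 (min ((k:ℝ)/(N:ℝ)) 1)) • (p:E2) = _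
    rw [e1]
  have v2 : ((sck (k+1) N p : DD) : E2) = (((k+1:ℕ):ℝ)/(N:ℝ)) • (p:E2) := by
    show (max 0 (min (((k+1:ℕ):ℝ)/(N:ℝ)) 1)) • (p:E2) = _
    rw [e2]
  have hx : ‖(p:E2)‖ ≤ 1 := by simpa [dist_zero_right] using mem_closedBall.mp p.2
  rw [Subtype.dist_eq, v1, v2, dist_eq_norm, ← sub_smul, norm_smul, Real.norm_eq_abs]
  have habs : |(k:ℝ)/(N:ℝ) - ((k+1:ℕ):ℝ)/(N:ℝ)| = 1/(N:ℝ) := by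
    have : (k:ℝ)/(N:ℝ) - ((k+1:ℕ):ℝ)/(N:ℝ) = -(1/(N:ℝ)) := by push_cast; field_simp; ring
    rw [this, abs_neg, abs_of_pos (by positivity)]
  rw [habs]
  calc 1/(N:ℝ) * ‖(p:E2)‖ ≤ 1/(N:ℝ) * 1 := by
        apply mul_le_mul_of_nonneg_left hx (by positivity)
    _ = 1/(N:ℝ) := by ring

lemma PhiD_neg (p q : DD) (hpq : (q : E2) = -(p : E2)) (hp1 : ‖(p:E2)‖ = 1) :
    PhiD q = -(PhiD p) := by
  apply Subtype.ext
  rw [coe_neg_sphere]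
  show phiv (q : E2) = -(phiv (p:E2))
  rw [hpq]
  have hnn : ‖(-(p:E2))‖ = 1 := by rw [norm_neg]; exact hp1
  ext i
  fin_cases i <;> simp [phiv, hp1, hnn]

lemma frame_words {A B : Hq} (hA : A*A = -1) (hB : B*B = -1) (hBA : B*A = -(A*B)) :
    (A*B)*A = B ∧ A*(A*B) = -B ∧ (A*B)*B = -A ∧ B*(A*B) = A ∧ (A*B)*(A*B) = -1 := by
  have hABA : (A*B)*A = B := by
    calc (A*B)*A = A*(B*A) := by noncomm_ring
      _ = A*(-(A*B)) := by rw [hBA]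
      _ = -((A*A)*B) := by noncomm_ring
      _ = B := by rw [hA]; noncomm_ring
  have hAAB : A*(A*B) = -B := by
    calc A*(A*B) = (A*A)*B := by noncomm_ring
      _ = -B := by rw [hA]; noncomm_ring
  have hABB : (A*B)*B = -A := by
    calc (A*B)*B = A*(B*B) := by noncomm_ring
      _ = -A := by rw [hB]; noncomm_ring
  have hBAB : B*(A*B) = A := by
    calc B*(A*B) = (B*A)*B := by noncomm_ring
      _ = (-(A*B))*B := by rw [hBA]
      _ = -(A*(B*B)) := by noncomm_ring
      _ = A := by rw [hB]; noncomm_ring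
  have hAB2 : (A*B)*(A*B) = -1 := by
    calc (A*B)*(A*B) = ((A*B)*A)*B := by noncomm_ring
      _ = B*B := by rw [hABA]
      _ = -1 := hB
  exact ⟨hABA, hAAB, hABB, hBAB, hAB2⟩

def chainProd (T : ℕ → Hq) : ℕ → Hq
  | 0 => 1
  | k+1 => T k * chainProd T k

set_option maxHeartbeats 2000000 in
theorem no_odd_frame (e₁ e₂ : S2 → (Fin 3 → ℝ))
    (hc1 : Continuous e₁) (hc2 : Continuous e₂)
    (h11 : ∀ s, dot3 (e₁ s) (e₁ s) = 1) (h22 : ∀ s, dot3 (e₂ s) (e₂ s) = 1)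
    (h12 : ∀ s, dot3 (e₁ s) (e₂ s) = 0)
    (hodd1 : ∀ s : S2, e₁ (-s) = -(e₁ s)) (hodd2 : ∀ s : S2, e₂ (-s) = -(e₂ s)) :
    False := by
  classical
  -- quaternionic frame
  set q1 : S2 → Hq := fun s => purq (e₁ s) with hq1def
  set q2 : S2 → Hq := fun s => purq (e₂ s) with hq2def
  set q3 : S2 → Hq := fun s => q1 s * q2 s with hq3def
  have r1 : ∀ s, q1 s * q1 s = -1 := fun s => purq_sq (h11 s)
  have r2 : ∀ s, q2 s * q2 s = -1 := fun s => purq_sq (h22 s)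
  have r21 : ∀ s, q2 s * q1 s = -(q1 s * q2 s) := fun s => purq_anticomm (h12 s)
  have r3 : ∀ s, q3 s * q3 s = -1 := fun s => (frame_words (r1 s) (r2 s) (r21 s)).2.2.2.2
  have o1 : ∀ s : S2, q1 (-s) = -(q1 s) := by
    intro s; show purq (e₁ (-s)) = -(purq (e₁ s)); rw [hodd1 s, purq_neg]
  have o2 : ∀ s : S2, q2 (-s) = -(q2 s) := by
    intro s; show purq (e₂ (-s)) = -(purq (e₂ s)); rw [hodd2 s, purq_neg]
  have o3 : ∀ s : S2, q3 (-s) = q3 s := by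
    intro s; show q1 (-s) * q2 (-s) = q1 s * q2 s
    rw [o1 s, o2 s, neg_mul_neg]
  have cq1 : Continuous q1 := continuous_purq hc1
  have cq2 : Continuous q2 := continuous_purq hc2
  have cq3 : Continuous q3 := cq1.mul cq2
  -- the transition quaternion
  set Tq : S2 → S2 → Hq :=
    fun s s' => 1 - (q1 s' * q1 s + q2 s' * q2 s + q3 s' * q3 s) with hTqdef
  have hTint : ∀ s s',
      (Tq s s' * q1 s = q1 s' * Tq s s') ∧ (Tq s s' * q2 s = q2 s' * Tq s s') ∧
      (Tq s s' * q3 s = q3 s' * Tq s s') := by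
    intro s s'
    have h := intertwine (r1 s) (r2 s) (r21 s) (r1 s') (r2 s') (r21 s')
    exact h
  have hTdiag : ∀ s, Tq s s = 4 := by
    intro s
    show 1 - (q1 s * q1 s + q2 s * q2 s + q3 s * q3 s) = 4
    rw [r1 s, r2 s, r3 s]; norm_num
  -- uniform continuity setup
  set TF : DD × DD → Hq := fun z => Tq (PhiD z.1) (PhiD z.2) with hTFdef
  have hTFc : Continuous TF := by
    have c1' : Continuous fun z : DD × DD => PhiD z.1 := continuous_PhiD.comp continuous_fst
    have c2' : Continuous fun z : DD × DD => PhiD z.2 := continuous_PhiD.comp continuous_snd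
    show Continuous fun z : DD × DD =>
      1 - (q1 (PhiD z.2) * q1 (PhiD z.1) + q2 (PhiD z.2) * q2 (PhiD z.1)
        + q3 (PhiD z.2) * q3 (PhiD z.1))
    exact continuous_const.sub
      ((((cq1.comp c2').mul (cq1.comp c1')).add ((cq2.comp c2').mul (cq2.comp c1'))).add
        ((cq3.comp c2').mul (cq3.comp c1')))
  have hUC := CompactSpace.uniformContinuous_of_continuous hTFc
  rcases Metric.uniformContinuous_iff.mp hUC 4 (by norm_num) with ⟨δ, hδ0, hδ⟩
  obtain ⟨n, hn⟩ := exists_nat_one_div_lt hδ0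
  set N : ℕ := n + 1 with hNdef
  have hNne : N ≠ 0 := Nat.succ_ne_zero n
  have hstep : ∀ (p : DD) (k : ℕ), k + 1 ≤ N →
      dist (sck k N p) (sck (k+1) N p) < δ := by
    intro p k hk
    calc dist (sck k N p) (sck (k+1) N p) ≤ 1/(N:ℝ) := sck_dist hk p
      _ < δ := by
          have : 1/((N:ℕ):ℝ) = 1/((n:ℝ)+1) := by rw [hNdef]; push_cast; norm_num
          rw [this]; exact hn
  have hgood : ∀ (p : DD) (k : ℕ), k + 1 ≤ N →
      TF (sck k N p, sck (k+1) N p) ≠ 0 := by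
    intro p k hk h0
    have hd : dist ((sck k N p, sck (k+1) N p) : DD × DD) (sck k N p, sck k N p) < δ := by
      rw [Prod.dist_eq]
      simp only [dist_self]
      rw [max_comm, max_eq_left dist_nonneg]
      rw [dist_comm]
      exact hstep p k hk
    have h4 := hδ hd
    rw [h0] at h4
    have hTF2 : TF (sck k N p, sck k N p) = 4 := hTdiag _
    rw [hTF2] at h4
    rw [dist_comm, dist_zero_right] at h4
    rw [show (4 : Hq) = ((4:ℝ) : Hq) by norm_cast, Quaternion.norm_coe] at h4
    norm_num at h4
  -- the chain product
  set Q : DD → Hq := fun p => chainProd (fun k => TF (sck k N p, sck (k+1) N p)) N with hQdef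
  have hchain : ∀ k : ℕ, k ≤ N →
      Continuous (fun p => chainProd (fun j => TF (sck j N p, sck (j+1) N p)) k) ∧
      (∀ p, chainProd (fun j => TF (sck j N p, sck (j+1) N p)) k ≠ 0) ∧
      (∀ p, (chainProd (fun j => TF (sck j N p, sck (j+1) N p)) k) * q1 (PhiD ctr)
          = q1 (PhiD (sck k N p)) * chainProd (fun j => TF (sck j N p, sck (j+1) N p)) k) ∧
      (∀ p, (chainProd (fun j => TF (sck j N p, sck (j+1) N p)) k) * q2 (PhiD ctr)
          = q2 (PhiD (sck k N p)) * chainProd (fun j => TF (sck j N p, sck (j+1) N p)) k) ∧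
      (∀ p, (chainProd (fun j => TF (sck j N p, sck (j+1) N p)) k) * q3 (PhiD ctr)
          = q3 (PhiD (sck k N p)) * chainProd (fun j => TF (sck j N p, sck (j+1) N p)) k) := by
    intro k
    induction k with
    | zero =>
      intro _
      refine ⟨continuous_const, fun p => one_ne_zero, fun p => ?_, fun p => ?_, fun p => ?_⟩ <;>
        rw [show chainProd (fun j => TF (sck j N p, sck (j+1) N p)) 0 = 1 from rfl,
          sck_zero N p, one_mul, mul_one]
    | succ k ih =>
      intro hk1
      have hk : k ≤ N := Nat.le_of_succ_le hk1
      obtain ⟨ihc, ihn, ih1, ih2, ih3⟩ := ih hk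
      have hTco : Continuous fun p => TF (sck k N p, sck (k+1) N p) :=
        hTFc.comp ((continuous_sck k N).prodMk (continuous_sck (k+1) N))
      have heq : ∀ p, chainProd (fun j => TF (sck j N p, sck (j+1) N p)) (k+1)
          = TF (sck k N p, sck (k+1) N p)
            * chainProd (fun j => TF (sck j N p, sck (j+1) N p)) k := fun p => rfl
      refine ⟨?_, ?_, ?_, ?_, ?_⟩
      · simp only [heq]; exact hTco.mul ihc
      · intro p; rw [heq]; exact mul_ne_zero (hgood p k hk1) (ihn p)
      · intro p
        rw [heq, mul_assoc, ih1 p, ← mul_assoc, (hTint _ _).1, mul_assoc]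
      · intro p
        rw [heq, mul_assoc, ih2 p, ← mul_assoc, (hTint _ _).2.1, mul_assoc]
      · intro p
        rw [heq, mul_assoc, ih3 p, ← mul_assoc, (hTint _ _).2.2, mul_assoc]
  obtain ⟨hQc, hQne, hQ1, hQ2, hQ3⟩ := hchain N le_rfl
  have hQinv1 : ∀ p : DD, Q p * q1 (PhiD ctr) = q1 (PhiD p) * Q p := by
    intro p; have := hQ1 p; rwa [sck_self N hNne p] at this
  have hQinv2 : ∀ p : DD, Q p * q2 (PhiD ctr) = q2 (PhiD p) * Q p := by
    intro p; have := hQ2 p; rwa [sck_self N hNne p] at this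
  have hQinv3 : ∀ p : DD, Q p * q3 (PhiD ctr) = q3 (PhiD p) * Q p := by
    intro p; have := hQ3 p; rwa [sck_self N hNne p] at this
  have hQcont : Continuous Q := hQc
  have hQnz : ∀ p : DD, Q p ≠ 0 := hQne
  have hq1ctr : q1 (PhiD ctr) = purq (e₁ (PhiD ctr)) := rfl
  have hq2ctr : q2 (PhiD ctr) = purq (e₂ (PhiD ctr)) := rfl
  clear hQc hQne hQ1 hQ2 hQ3 hchain hgood hstep hδ hTint hTdiag hTFc hUC
  clear_value Q TF Tq
  -- boundary circle
  have hinDc : Continuous (fun z : Metric.sphere (0:E2) 1 =>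
      (⟨(z : E2), sphere_subset_closedBall z.2⟩ : DD)) :=
    Continuous.subtype_mk continuous_subtype_val _
  set inD : Metric.sphere (0:E2) 1 → DD :=
    fun z => ⟨(z : E2), sphere_subset_closedBall z.2⟩ with hinDdef
  have hPhineg : ∀ z : Metric.sphere (0:E2) 1, PhiD (inD (-z)) = -(PhiD (inD z)) := by
    intro z
    apply PhiD_neg
    · show ((-z : Metric.sphere (0:E2) 1) : E2) = -((z : E2))
      exact coe_neg_sphere z
    · exact mem_sphere_zero_iff_norm.mp z.2
  have w0 := frame_words (r1 (PhiD ctr)) (r2 (PhiD ctr)) (r21 (PhiD ctr))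
  have h31 : q3 (PhiD ctr) * q1 (PhiD ctr) = -(q1 (PhiD ctr) * q3 (PhiD ctr)) := by
    show (q1 (PhiD ctr) * q2 (PhiD ctr)) * q1 (PhiD ctr)
        = -(q1 (PhiD ctr) * (q1 (PhiD ctr) * q2 (PhiD ctr)))
    rw [w0.1, w0.2.1, neg_neg]
  have h32 : q3 (PhiD ctr) * q2 (PhiD ctr) = -(q2 (PhiD ctr) * q3 (PhiD ctr)) := by
    show (q1 (PhiD ctr) * q2 (PhiD ctr)) * q2 (PhiD ctr)
        = -(q2 (PhiD ctr) * (q1 (PhiD ctr) * q2 (PhiD ctr)))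
    rw [w0.2.2.1, w0.2.2.2.1]
  have hc3cross : q3 (PhiD ctr)
      = purq (cross3 (e₁ (PhiD ctr)) (e₂ (PhiD ctr))) := by
    show purq (e₁ (PhiD ctr)) * purq (e₂ (PhiD ctr)) = _
    exact purq_mul_eq_cross (h12 _)
  clear_value q1 q2 q3
  set g : Metric.sphere (0:E2) 1 → ℝ :=
    fun z => ((Q (inD (-z)))⁻¹ * Q (inD z) * q3 (PhiD ctr)).re with hgdef
  have hreal : ∀ z, (Q (inD (-z)))⁻¹ * Q (inD z) * q3 (PhiD ctr) = ((g z : ℝ) : Hq) := by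
    intro z
    have hu0 : Q (inD z) ≠ 0 := hQnz _
    have hw0 : Q (inD (-z)) ≠ 0 := hQnz _
    have huc1 := hQinv1 (inD z)
    have huc2 := hQinv2 (inD z)
    have huc3 := hQinv3 (inD z)
    have hwc1 : Q (inD (-z)) * q1 (PhiD ctr) = -(q1 (PhiD (inD z))) * Q (inD (-z)) := by
      have h := hQinv1 (inD (-z)); rwa [hPhineg z, o1] at h
    have hwc2 : Q (inD (-z)) * q2 (PhiD ctr) = -(q2 (PhiD (inD z))) * Q (inD (-z)) := by
      have h := hQinv2 (inD (-z)); rwa [hPhineg z, o2] at h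
    have hwc3 : Q (inD (-z)) * q3 (PhiD ctr) = q3 (PhiD (inD z)) * Q (inD (-z)) := by
      have h := hQinv3 (inD (-z)); rwa [hPhineg z, o3] at h
    have hinv1 : (Q (inD (-z)))⁻¹ * (-(q1 (PhiD (inD z)))) = q1 (PhiD ctr) * (Q (inD (-z)))⁻¹ := by
      calc (Q (inD (-z)))⁻¹ * (-(q1 (PhiD (inD z))))
          = (Q (inD (-z)))⁻¹ * (((-(q1 (PhiD (inD z)))) * Q (inD (-z))) * (Q (inD (-z)))⁻¹) := by
            rw [mul_assoc, mul_inv_cancel₀ hw0, mul_one]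
        _ = (Q (inD (-z)))⁻¹ * ((Q (inD (-z)) * q1 (PhiD ctr)) * (Q (inD (-z)))⁻¹) := by
            rw [← hwc1]
        _ = q1 (PhiD ctr) * (Q (inD (-z)))⁻¹ := by
            rw [← mul_assoc, ← mul_assoc, inv_mul_cancel₀ hw0, one_mul]
    have hinv2 : (Q (inD (-z)))⁻¹ * (-(q2 (PhiD (inD z)))) = q2 (PhiD ctr) * (Q (inD (-z)))⁻¹ := by
      calc (Q (inD (-z)))⁻¹ * (-(q2 (PhiD (inD z))))
          = (Q (inD (-z)))⁻¹ * (((-(q2 (PhiD (inD z)))) * Q (inD (-z))) * (Q (inD (-z)))⁻¹) := by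
            rw [mul_assoc, mul_inv_cancel₀ hw0, mul_one]
        _ = (Q (inD (-z)))⁻¹ * ((Q (inD (-z)) * q2 (PhiD ctr)) * (Q (inD (-z)))⁻¹) := by
            rw [← hwc2]
        _ = q2 (PhiD ctr) * (Q (inD (-z)))⁻¹ := by
            rw [← mul_assoc, ← mul_assoc, inv_mul_cancel₀ hw0, one_mul]
    have hinv3 : (Q (inD (-z)))⁻¹ * (q3 (PhiD (inD z))) = q3 (PhiD ctr) * (Q (inD (-z)))⁻¹ := by
      calc (Q (inD (-z)))⁻¹ * (q3 (PhiD (inD z)))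
          = (Q (inD (-z)))⁻¹ * (((q3 (PhiD (inD z))) * Q (inD (-z))) * (Q (inD (-z)))⁻¹) := by
            rw [mul_assoc, mul_inv_cancel₀ hw0, mul_one]
        _ = (Q (inD (-z)))⁻¹ * ((Q (inD (-z)) * q3 (PhiD ctr)) * (Q (inD (-z)))⁻¹) := by
            rw [← hwc3]
        _ = q3 (PhiD ctr) * (Q (inD (-z)))⁻¹ := by
            rw [← mul_assoc, ← mul_assoc, inv_mul_cancel₀ hw0, one_mul]
    have comm1 : ((Q (inD (-z)))⁻¹ * Q (inD z) * q3 (PhiD ctr)) * q1 (PhiD ctr)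
        = q1 (PhiD ctr) * ((Q (inD (-z)))⁻¹ * Q (inD z) * q3 (PhiD ctr)) := by
      calc ((Q (inD (-z)))⁻¹ * Q (inD z) * q3 (PhiD ctr)) * q1 (PhiD ctr)
          = (Q (inD (-z)))⁻¹ * Q (inD z) * (q3 (PhiD ctr) * q1 (PhiD ctr)) := by noncomm_ring
        _ = (Q (inD (-z)))⁻¹ * Q (inD z) * (-(q1 (PhiD ctr) * q3 (PhiD ctr))) := by rw [h31]
        _ = -((Q (inD (-z)))⁻¹ * (Q (inD z) * q1 (PhiD ctr)) * q3 (PhiD ctr)) := by noncomm_ring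
        _ = -((Q (inD (-z)))⁻¹ * (q1 (PhiD (inD z)) * Q (inD z)) * q3 (PhiD ctr)) := by rw [huc1]
        _ = ((Q (inD (-z)))⁻¹ * (-(q1 (PhiD (inD z))))) * (Q (inD z) * q3 (PhiD ctr)) := by
            noncomm_ring
        _ = (q1 (PhiD ctr) * (Q (inD (-z)))⁻¹) * (Q (inD z) * q3 (PhiD ctr)) := by rw [hinv1]
        _ = q1 (PhiD ctr) * ((Q (inD (-z)))⁻¹ * Q (inD z) * q3 (PhiD ctr)) := by noncomm_ring
    have comm2 : ((Q (inD (-z)))⁻¹ * Q (inD z) * q3 (PhiD ctr)) * q2 (PhiD ctr)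
        = q2 (PhiD ctr) * ((Q (inD (-z)))⁻¹ * Q (inD z) * q3 (PhiD ctr)) := by
      calc ((Q (inD (-z)))⁻¹ * Q (inD z) * q3 (PhiD ctr)) * q2 (PhiD ctr)
          = (Q (inD (-z)))⁻¹ * Q (inD z) * (q3 (PhiD ctr) * q2 (PhiD ctr)) := by noncomm_ring
        _ = (Q (inD (-z)))⁻¹ * Q (inD z) * (-(q2 (PhiD ctr) * q3 (PhiD ctr))) := by rw [h32]
        _ = -((Q (inD (-z)))⁻¹ * (Q (inD z) * q2 (PhiD ctr)) * q3 (PhiD ctr)) := by noncomm_ring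
        _ = -((Q (inD (-z)))⁻¹ * (q2 (PhiD (inD z)) * Q (inD z)) * q3 (PhiD ctr)) := by rw [huc2]
        _ = ((Q (inD (-z)))⁻¹ * (-(q2 (PhiD (inD z))))) * (Q (inD z) * q3 (PhiD ctr)) := by
            noncomm_ring
        _ = (q2 (PhiD ctr) * (Q (inD (-z)))⁻¹) * (Q (inD z) * q3 (PhiD ctr)) := by rw [hinv2]
        _ = q2 (PhiD ctr) * ((Q (inD (-z)))⁻¹ * Q (inD z) * q3 (PhiD ctr)) := by noncomm_ring
    have comm3 : ((Q (inD (-z)))⁻¹ * Q (inD z) * q3 (PhiD ctr)) * q3 (PhiD ctr)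
        = q3 (PhiD ctr) * ((Q (inD (-z)))⁻¹ * Q (inD z) * q3 (PhiD ctr)) := by
      have lhs : ((Q (inD (-z)))⁻¹ * Q (inD z) * q3 (PhiD ctr)) * q3 (PhiD ctr)
          = -((Q (inD (-z)))⁻¹ * Q (inD z)) := by
        calc ((Q (inD (-z)))⁻¹ * Q (inD z) * q3 (PhiD ctr)) * q3 (PhiD ctr)
            = (Q (inD (-z)))⁻¹ * Q (inD z) * (q3 (PhiD ctr) * q3 (PhiD ctr)) := by noncomm_ring
          _ = (Q (inD (-z)))⁻¹ * Q (inD z) * (-1) := by rw [r3]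
          _ = -((Q (inD (-z)))⁻¹ * Q (inD z)) := by noncomm_ring
      have rhs : q3 (PhiD ctr) * ((Q (inD (-z)))⁻¹ * Q (inD z) * q3 (PhiD ctr))
          = -((Q (inD (-z)))⁻¹ * Q (inD z)) := by
        calc q3 (PhiD ctr) * ((Q (inD (-z)))⁻¹ * Q (inD z) * q3 (PhiD ctr))
            = (q3 (PhiD ctr) * (Q (inD (-z)))⁻¹) * (Q (inD z) * q3 (PhiD ctr)) := by noncomm_ring
          _ = ((Q (inD (-z)))⁻¹ * (q3 (PhiD (inD z)))) * (Q (inD z) * q3 (PhiD ctr)) := by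
              rw [hinv3]
          _ = (Q (inD (-z)))⁻¹ * ((q3 (PhiD (inD z)) * Q (inD z)) * q3 (PhiD ctr)) := by
              noncomm_ring
          _ = (Q (inD (-z)))⁻¹ * ((Q (inD z) * q3 (PhiD ctr)) * q3 (PhiD ctr)) := by rw [huc3]
          _ = (Q (inD (-z)))⁻¹ * (Q (inD z) * (q3 (PhiD ctr) * q3 (PhiD ctr))) := by noncomm_ring
          _ = (Q (inD (-z)))⁻¹ * (Q (inD z) * (-1)) := by rw [r3]
          _ = -((Q (inD (-z)))⁻¹ * Q (inD z)) := by noncomm_ring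
      rw [lhs, rhs]
    have comm3' : ((Q (inD (-z)))⁻¹ * Q (inD z) * q3 (PhiD ctr))
          * purq (cross3 (e₁ (PhiD ctr)) (e₂ (PhiD ctr)))
        = purq (cross3 (e₁ (PhiD ctr)) (e₂ (PhiD ctr)))
          * ((Q (inD (-z)))⁻¹ * Q (inD z) * q3 (PhiD ctr)) := by
      rw [← hc3cross]; exact comm3
    rw [hq1ctr] at comm1
    rw [hq2ctr] at comm2
    exact commutant (h11 (PhiD ctr)) (h22 (PhiD ctr)) (h12 (PhiD ctr)) comm1 comm2 comm3'
  have hc3ne : q3 (PhiD ctr) ≠ 0 := by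
    intro hc
    have hr := r3 (PhiD ctr)
    rw [hc, mul_zero] at hr
    exact one_ne_zero (neg_eq_zero.mp hr.symm)
  have hne : ∀ z, g z ≠ 0 := by
    intro z h0
    have h := hreal z
    rw [h0] at h
    have hnz : (Q (inD (-z)))⁻¹ * Q (inD z) * q3 (PhiD ctr) ≠ 0 :=
      mul_ne_zero (mul_ne_zero (inv_ne_zero (hQnz _)) (hQnz _)) hc3ne
    apply hnz
    rw [h]
    exact Quaternion.coe_zero
  have hprod : ∀ z, g (-z) * g z = -1 := by
    intro z
    have hu0 : Q (inD z) ≠ 0 := hQnz _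
    have hw0 : Q (inD (-z)) ≠ 0 := hQnz _
    have hz1 := hreal z
    have hz2 := hreal (-z)
    have hnnz : -(-z) = z := by
      apply Subtype.ext
      rw [coe_neg_sphere, coe_neg_sphere, neg_neg]
    rw [hnnz] at hz2
    have e1 : Q (inD z) * q3 (PhiD ctr) = Q (inD (-z)) * ((g z : ℝ) : Hq) := by
      have h := congrArg (fun y => Q (inD (-z)) * y) hz1
      rwa [show Q (inD (-z)) * ((Q (inD (-z)))⁻¹ * Q (inD z) * q3 (PhiD ctr))
          = (Q (inD (-z)) * (Q (inD (-z)))⁻¹) * (Q (inD z) * q3 (PhiD ctr)) by noncomm_ring,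
        mul_inv_cancel₀ hw0, one_mul] at h
    have e2 : Q (inD (-z)) * q3 (PhiD ctr) = Q (inD z) * ((g (-z) : ℝ) : Hq) := by
      have h := congrArg (fun y => Q (inD z) * y) hz2
      rwa [show Q (inD z) * ((Q (inD z))⁻¹ * Q (inD (-z)) * q3 (PhiD ctr))
          = (Q (inD z) * (Q (inD z))⁻¹) * (Q (inD (-z)) * q3 (PhiD ctr)) by noncomm_ring,
        mul_inv_cancel₀ hu0, one_mul] at h
    have e3 : Q (inD z) * (q3 (PhiD ctr) * q3 (PhiD ctr))
        = Q (inD z) * (((g (-z) * g z : ℝ)) : Hq) := by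
      calc Q (inD z) * (q3 (PhiD ctr) * q3 (PhiD ctr))
          = (Q (inD z) * q3 (PhiD ctr)) * q3 (PhiD ctr) := by noncomm_ring
        _ = (Q (inD (-z)) * ((g z : ℝ) : Hq)) * q3 (PhiD ctr) := by rw [e1]
        _ = (Q (inD (-z)) * q3 (PhiD ctr)) * ((g z : ℝ) : Hq) := by
            rw [mul_assoc, mul_assoc, (Quaternion.coe_commute (g z) (q3 (PhiD ctr)))]
        _ = (Q (inD z) * ((g (-z) : ℝ) : Hq)) * ((g z : ℝ) : Hq) := by rw [e2]
        _ = Q (inD z) * (((g (-z) : ℝ) : Hq) * ((g z : ℝ) : Hq)) := by noncomm_ring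
        _ = Q (inD z) * (((g (-z) * g z : ℝ)) : Hq) := by rw [Quaternion.coe_mul]
    rw [r3] at e3
    have e4 : ((( -1 : ℝ)) : Hq) = (((g (-z) * g z : ℝ)) : Hq) := by
      apply mul_left_cancel₀ hu0
      rw [← e3]
      norm_cast
    have := Quaternion.coe_injective e4
    linarith [this]
  -- connectivity of the circle gives a contradiction
  haveI : ConnectedSpace (Metric.sphere (0:E2) 1) := by
    rw [← isConnected_iff_connectedSpace]
    apply isConnected_sphere ?_ 0 zero_le_one
    have h : Module.finrank ℝ E2 = 2 := finrank_euclideanSpace_fin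
    have h2 := Module.finrank_eq_rank ℝ E2
    rw [h] at h2; rw [← h2]; norm_num
  have hgc : Continuous g := by
    have hnegc : Continuous (fun z : Metric.sphere (0:E2) 1 => -z) := by
      apply continuous_induced_rng.mpr
      have hco : (Subtype.val ∘ fun z : Metric.sphere (0:E2) 1 => -z)
          = fun z : Metric.sphere (0:E2) 1 => -(z : E2) := funext fun z => coe_neg_sphere z
      rw [hco]
      exact continuous_neg.comp continuous_subtype_val
    have hz1 : Continuous fun z : Metric.sphere (0:E2) 1 => Q (inD z) := hQcont.comp hinDc
    have hz2 : Continuous fun z : Metric.sphere (0:E2) 1 => (Q (inD (-z)))⁻¹ :=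
      Continuous.inv₀ (hz1.comp hnegc) (fun z => hQnz _)
    exact Quaternion.continuous_re.comp ((hz2.mul hz1).mul continuous_const)
  have hz0mem : EuclideanSpace.single (0 : Fin 2) (1:ℝ) ∈ Metric.sphere (0:E2) 1 := by
    simp [mem_sphere_iff_norm, EuclideanSpace.norm_single]
  set z0 : Metric.sphere (0:E2) 1 := ⟨EuclideanSpace.single 0 1, hz0mem⟩ with hz0def
  have hpz0 := hprod z0
  rcases lt_or_gt_of_ne (hne z0) with hneg | hpos
  · have hgpos : 0 < g (-z0) := by nlinarith
    obtain ⟨z, hz⟩ := intermediate_value_univ z0 (-z0) hgc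
      (⟨le_of_lt hneg, le_of_lt hgpos⟩ : (0:ℝ) ∈ Set.Icc (g z0) (g (-z0)))
    exact hne z hz
  · have hgneg : g (-z0) < 0 := by nlinarith
    obtain ⟨z, hz⟩ := intermediate_value_univ (-z0) z0 hgc
      (⟨le_of_lt hgneg, le_of_lt hpos⟩ : (0:ℝ) ∈ Set.Icc (g (-z0)) (g z0))
    exact hne z hz

lemma dot3_pos {v : Fin 3 → ℝ} (hv : v ≠ 0) : 0 < dot3 v v := by
  rcases Function.ne_iff.mp hv with ⟨i, hi⟩
  unfold dot3
  fin_cases i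
  · have hx : v 0 ≠ 0 := hi
    nlinarith [mul_self_nonneg (v 1), mul_self_nonneg (v 2), mul_self_pos.mpr hx]
  · have hx : v 1 ≠ 0 := hi
    nlinarith [mul_self_nonneg (v 0), mul_self_nonneg (v 2), mul_self_pos.mpr hx]
  · have hx : v 2 ≠ 0 := hi
    nlinarith [mul_self_nonneg (v 0), mul_self_nonneg (v 1), mul_self_pos.mpr hx]

lemma dot3_smul_left (c : ℝ) (u v : Fin 3 → ℝ) : dot3 (c • u) v = c * dot3 u v := by
  simp [dot3]; ring

lemma dot3_smul_right (c : ℝ) (u v : Fin 3 → ℝ) : dot3 u (c • v) = c * dot3 u v := by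
  simp [dot3]; ring

lemma dot3_sub_right (u v w : Fin 3 → ℝ) : dot3 u (v - w) = dot3 u v - dot3 u w := by
  simp [dot3]; ring

lemma dot3_neg_neg (u v : Fin 3 → ℝ) : dot3 (-u) (-v) = dot3 u v := by
  simp [dot3]

lemma continuous_dot3 {X : Type*} [TopologicalSpace X] {f g : X → Fin 3 → ℝ}
    (hf : Continuous f) (hg : Continuous g) : Continuous fun x => dot3 (f x) (g x) := by
  unfold dot3
  exact ((((continuous_apply 0).comp hf).mul ((continuous_apply 0).comp hg)).add
    (((continuous_apply 1).comp hf).mul ((continuous_apply 1).comp hg))).add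
    (((continuous_apply 2).comp hf).mul ((continuous_apply 2).comp hg))

end NoOddFrame

open NoOddFrame in
/-- Non-triviality of γ⊕γ⊕ε over ℝP² (concrete form): there is no continuous
family of invertible 3×3 real matrices over S² whose first two columns are odd
and whose third column is even. -/
theorem no_invertible_odd_odd_even_matrix_on_S2 :
    ¬ ∃ Ω : Metric.sphere (0 : EuclideanSpace ℝ (Fin 3)) 1 →
        Matrix (Fin 3) (Fin 3) ℝ,
      Continuous Ω ∧
      (∀ s, IsUnit (Ω s)) ∧
      (∀ s, ∀ i : Fin 3, Ω (-s) i 0 = -Ω s i 0) ∧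
      (∀ s, ∀ i : Fin 3, Ω (-s) i 1 = -Ω s i 1) ∧
      (∀ s, ∀ i : Fin 3, Ω (-s) i 2 = Ω s i 2) := by
  rintro ⟨Ω, hc, hu, hodd0, hodd1, -⟩
  set col0 : S2 → (Fin 3 → ℝ) := fun s i => Ω s i 0 with hcol0def
  set col1 : S2 → (Fin 3 → ℝ) := fun s i => Ω s i 1 with hcol1def
  have hccol0 : Continuous col0 :=
    continuous_pi fun i => (continuous_apply (0 : Fin 3)).comp ((continuous_apply i).comp hc)
  have hccol1 : Continuous col1 :=
    continuous_pi fun i => (continuous_apply (1 : Fin 3)).comp ((continuous_apply i).comp hc)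
  have hinj : ∀ (s : S2) (x : Fin 3 → ℝ), (Ω s).mulVec x = 0 → x = 0 := by
    intro s x hx
    have hunit := (Matrix.isUnit_iff_isUnit_det _).mp (hu s)
    have hinv := Matrix.nonsing_inv_mul (Ω s) hunit
    calc x = (1 : Matrix (Fin 3) (Fin 3) ℝ).mulVec x := (Matrix.one_mulVec x).symm
      _ = ((Ω s)⁻¹ * (Ω s)).mulVec x := by rw [hinv]
      _ = (Ω s)⁻¹.mulVec ((Ω s).mulVec x) := (Matrix.mulVec_mulVec x (Ω s)⁻¹ (Ω s)).symm
      _ = 0 := by rw [hx, Matrix.mulVec_zero]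
  have hmv : ∀ (s : S2) (x : Fin 3 → ℝ),
      (Ω s).mulVec x = fun i => x 0 * Ω s i 0 + x 1 * Ω s i 1 + x 2 * Ω s i 2 := by
    intro s x
    funext i
    simp [Matrix.mulVec, dotProduct, Fin.sum_univ_three]
    ring
  have hcol0ne : ∀ s, col0 s ≠ 0 := by
    intro s h
    have hz : (Ω s).mulVec ![1,0,0] = 0 := by
      rw [hmv]
      funext i
      have hi := congrFun h i
      simp only [hcol0def, Pi.zero_apply] at hi
      simp [hi]
    have h10 := congrFun (hinj s ![1,0,0] hz) 0
    norm_num at h10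
  -- Gram–Schmidt
  set A : S2 → ℝ := fun s => dot3 (col0 s) (col0 s) with hAdef
  have hApos : ∀ s, 0 < A s := fun s => dot3_pos (hcol0ne s)
  have hsA : ∀ s, Real.sqrt (A s) ≠ 0 := fun s => (Real.sqrt_pos.mpr (hApos s)).ne'
  set e1 : S2 → (Fin 3 → ℝ) := fun s => (Real.sqrt (A s))⁻¹ • col0 s with he1def
  have h11 : ∀ s, dot3 (e1 s) (e1 s) = 1 := by
    intro s
    show dot3 ((Real.sqrt (A s))⁻¹ • col0 s) ((Real.sqrt (A s))⁻¹ • col0 s) = 1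
    rw [dot3_smul_left, dot3_smul_right]
    have hmul : Real.sqrt (A s) * Real.sqrt (A s) = A s :=
      Real.mul_self_sqrt (le_of_lt (hApos s))
    show (Real.sqrt (A s))⁻¹ * ((Real.sqrt (A s))⁻¹ * A s) = 1
    rw [← hmul]
    field_simp
    rw [Real.sqrt_sq (Real.sqrt_nonneg _)]; exact div_self (pow_ne_zero 2 (hsA s))
  set d : S2 → ℝ := fun s => dot3 (col1 s) (e1 s) with hddef
  set w : S2 → (Fin 3 → ℝ) := fun s => col1 s - d s • e1 s with hwdef
  have hwne : ∀ s, w s ≠ 0 := by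
    intro s h
    have hcol1eq : col1 s = (d s * (Real.sqrt (A s))⁻¹) • col0 s := by
      have h' : col1 s = d s • e1 s := by
        have := sub_eq_zero.mp h
        exact this
      rw [h', he1def]
      simp [smul_smul]
    set t : ℝ := d s * (Real.sqrt (A s))⁻¹ with htdef
    have hz : (Ω s).mulVec ![t, -1, 0] = 0 := by
      rw [hmv]
      funext i
      have hi := congrFun hcol1eq i
      simp only [hcol1def, Pi.smul_apply, smul_eq_mul, hcol0def] at hi
      simp [hi]
    have h10 := congrFun (hinj s ![t, -1, 0] hz) 1
    norm_num at h10
  have horth : ∀ s, dot3 (e1 s) (w s) = 0 := by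
    intro s
    show dot3 (e1 s) (col1 s - d s • e1 s) = 0
    rw [dot3_sub_right, dot3_smul_right, h11 s, dot3_comm (e1 s) (col1 s)]
    show dot3 (col1 s) (e1 s) - d s * 1 = 0
    rw [hddef]
    ring
  set B : S2 → ℝ := fun s => dot3 (w s) (w s) with hBdef
  have hBpos : ∀ s, 0 < B s := fun s => dot3_pos (hwne s)
  have hsB : ∀ s, Real.sqrt (B s) ≠ 0 := fun s => (Real.sqrt_pos.mpr (hBpos s)).ne'
  set e2 : S2 → (Fin 3 → ℝ) := fun s => (Real.sqrt (B s))⁻¹ • w s with he2def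
  have h22 : ∀ s, dot3 (e2 s) (e2 s) = 1 := by
    intro s
    show dot3 ((Real.sqrt (B s))⁻¹ • w s) ((Real.sqrt (B s))⁻¹ • w s) = 1
    rw [dot3_smul_left, dot3_smul_right]
    have hmul : Real.sqrt (B s) * Real.sqrt (B s) = B s :=
      Real.mul_self_sqrt (le_of_lt (hBpos s))
    show (Real.sqrt (B s))⁻¹ * ((Real.sqrt (B s))⁻¹ * B s) = 1
    rw [← hmul]
    field_simp
    rw [Real.sqrt_sq (Real.sqrt_nonneg _)]; exact div_self (pow_ne_zero 2 (hsB s))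
  have h12 : ∀ s, dot3 (e1 s) (e2 s) = 0 := by
    intro s
    show dot3 (e1 s) ((Real.sqrt (B s))⁻¹ • w s) = 0
    rw [dot3_smul_right, horth s, mul_zero]
  -- parities
  have hc0neg : ∀ s : S2, col0 (-s) = -(col0 s) := by
    intro s; funext i; exact hodd0 s i
  have hc1neg : ∀ s : S2, col1 (-s) = -(col1 s) := by
    intro s; funext i; exact hodd1 s i
  have hAneg : ∀ s : S2, A (-s) = A s := by
    intro s
    show dot3 (col0 (-s)) (col0 (-s)) = dot3 (col0 s) (col0 s)
    rw [hc0neg s, dot3_neg_neg]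
  have he1neg : ∀ s : S2, e1 (-s) = -(e1 s) := by
    intro s
    show (Real.sqrt (A (-s)))⁻¹ • col0 (-s) = -((Real.sqrt (A s))⁻¹ • col0 s)
    rw [hAneg s, hc0neg s, smul_neg]
  have hdneg : ∀ s : S2, d (-s) = d s := by
    intro s
    show dot3 (col1 (-s)) (e1 (-s)) = dot3 (col1 s) (e1 s)
    rw [hc1neg s, he1neg s, dot3_neg_neg]
  have hwneg : ∀ s : S2, w (-s) = -(w s) := by
    intro s
    show col1 (-s) - d (-s) • e1 (-s) = -(col1 s - d s • e1 s)
    rw [hc1neg s, hdneg s, he1neg s, smul_neg]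
    abel
  have hBneg : ∀ s : S2, B (-s) = B s := by
    intro s
    show dot3 (w (-s)) (w (-s)) = dot3 (w s) (w s)
    rw [hwneg s, dot3_neg_neg]
  have he2neg : ∀ s : S2, e2 (-s) = -(e2 s) := by
    intro s
    show (Real.sqrt (B (-s)))⁻¹ • w (-s) = -((Real.sqrt (B s))⁻¹ • w s)
    rw [hBneg s, hwneg s, smul_neg]
  -- continuity
  have hcA : Continuous A := continuous_dot3 hccol0 hccol0
  have hce1 : Continuous e1 :=
    ((Real.continuous_sqrt.comp hcA).inv₀ hsA).smul hccol0
  have hcd : Continuous d := continuous_dot3 hccol1 hce1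
  have hcw : Continuous w := hccol1.sub (hcd.smul hce1)
  have hcB : Continuous B := continuous_dot3 hcw hcw
  have hce2 : Continuous e2 :=
    ((Real.continuous_sqrt.comp hcB).inv₀ hsB).smul hcw
  exact no_odd_frame e1 e2 hce1 hce2 h11 h22 h12 he1neg he2neg


end
end

section
/- (Non-triviality of nγ over ℝP¹ for n odd, concrete form) Let n be odd. There is no continuous map Λ : S¹ → Matrix (Fin n) (Fin n) ℝ satisfying Λ(-s) = -Λ(s) for all s ∈ S¹ such that Λ(s) is invertible for every s ∈ S¹. -/
/-- Non-triviality of nγ over ℝP¹ for n odd (concrete form): for n odd there is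
no continuous odd family of invertible n×n real matrices over the circle S¹. -/
theorem no_odd_invertible_matrix_family_on_circle (n : ℕ) (hn : Odd n) :
    ¬ ∃ Λ : Metric.sphere (0 : EuclideanSpace ℝ (Fin 2)) 1 →
        Matrix (Fin n) (Fin n) ℝ,
      Continuous Λ ∧ (∀ s, Λ (-s) = -Λ s) ∧ (∀ s, IsUnit (Λ s)) := by
  rintro ⟨Λ, hc, hodd, hu⟩
  set f : Metric.sphere (0 : EuclideanSpace ℝ (Fin 2)) 1 → ℝ :=
    fun s => (Λ s).det with hf
  have hfc : Continuous f := hc.matrix_det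
  have hne : ∀ s, f s ≠ 0 := by
    intro s
    have := (Matrix.isUnit_iff_isUnit_det _).mp (hu s)
    simpa [isUnit_iff_ne_zero, hf] using this
  have hfo : ∀ s, f (-s) = -f s := by
    intro s
    simp only [hf, hodd s, Matrix.det_neg, Fintype.card_fin, hn.neg_one_pow, neg_one_mul]
  -- the sphere is connected
  have hconn : IsConnected (Metric.sphere (0 : EuclideanSpace ℝ (Fin 2)) 1) := by
    apply isConnected_sphere ?_ _ (zero_le_one)
    · rw [← Module.finrank_eq_rank, finrank_euclideanSpace, Fintype.card_fin]
      exact_mod_cast one_lt_two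
  haveI : PreconnectedSpace (Metric.sphere (0 : EuclideanSpace ℝ (Fin 2)) 1) :=
    (Subtype.preconnectedSpace hconn.isPreconnected)
  -- pick a point
  obtain ⟨s₀, hs₀⟩ := (NormedSpace.sphere_nonempty (E := EuclideanSpace ℝ (Fin 2))).mpr zero_le_one
  set p : Metric.sphere (0 : EuclideanSpace ℝ (Fin 2)) 1 := ⟨s₀, hs₀⟩
  have key : (0 : ℝ) ∈ Set.range f := by
    rcases lt_or_gt_of_ne (hne p) with h | h
    · exact intermediate_value_univ p (-p) hfc ⟨h.le, by rw [hfo]; linarith⟩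
    · exact intermediate_value_univ (-p) p hfc ⟨by rw [hfo]; linarith, h.le⟩
  obtain ⟨s, hs⟩ := key
  exact hne s hs
end
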